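/- arXiv:2210.09127 — 5 statements merged into one kernel-verified Lean document; each statement's English description precedes it below -/
import Mathlib

section
/- For α ∈ (0,1), β ∈ (1, 1+α), and u(x) = |x|^β - 1 on the unit ball B₁ ⊂ ℝ^N, the function u is convex, its Hessian determinant det D²u = β^N(β-1)|x|^{N(β-2)} belongs to L¹(B₁), but u is not in C^{1,α}_{loc}(B₁). -/
open MeasureTheory Metric Real

noncomputable def Hess {N : ℕ} (u : EuclideanSpace ℝ (Fin N) → ℝ)
    (x : EuclideanSpace ℝ (Fin N)) : Matrix (Fin N) (Fin N) ℝ :=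
  fun i j => fderiv ℝ (fun y => fderiv ℝ u y (EuclideanSpace.single i 1)) x
    (EuclideanSpace.single j 1)

section aux

variable {N : ℕ}

local notation "E" => EuclideanSpace ℝ (Fin N)

/-- Derivative of `‖·‖ ^ p` away from the origin. -/
lemma myHasFDerivAt_norm_rpow (p : ℝ) {y : EuclideanSpace ℝ (Fin N)} (hy : y ≠ 0) :
    HasFDerivAt (fun z : EuclideanSpace ℝ (Fin N) => ‖z‖ ^ p)
      ((p * ‖y‖ ^ (p - 2)) • innerSL ℝ y) y := by
  have hy' : (0:ℝ) < ‖y‖ := norm_pos_iff.mpr hy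
  have hq : HasFDerivAt (fun z : E => (inner ℝ z z : ℝ))
      ((fderivInnerCLM ℝ (y, y)).comp
        ((ContinuousLinearMap.id ℝ E).prod (ContinuousLinearMap.id ℝ E))) y :=
    (hasFDerivAt_id y).inner ℝ (hasFDerivAt_id y)
  have hne : (inner ℝ y y : ℝ) ≠ 0 := by
    rw [real_inner_self_eq_norm_sq]; positivity
  have h2 := hq.rpow_const (p := p/2) (Or.inl hne)
  have hfun : (fun z : E => (inner ℝ z z : ℝ) ^ (p/2)) = fun z : E => ‖z‖ ^ p := by
    funext z
    rw [real_inner_self_eq_norm_sq, ← Real.rpow_natCast ‖z‖ 2,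
      ← Real.rpow_mul (norm_nonneg z)]
    congr 1
    push_cast
    ring
  rw [hfun] at h2
  refine h2.congr_fderiv ?_
  ext v
  simp only [ContinuousLinearMap.smul_apply, innerSL_apply_apply, ContinuousLinearMap.coe_comp',
    Function.comp_apply, ContinuousLinearMap.prod_apply, ContinuousLinearMap.coe_id', id,
    fderivInnerCLM_apply, smul_eq_mul]
  rw [real_inner_self_eq_norm_sq, ← Real.rpow_natCast ‖y‖ 2,
    ← Real.rpow_mul (norm_nonneg y), real_inner_comm v y]
  have : ((2:ℕ):ℝ) * (p/2 - 1) = p - 2 := by push_cast; ring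
  rw [this]
  ring

lemma myHessEntry (β : ℝ) {x : EuclideanSpace ℝ (Fin N)} (hx : x ≠ 0) (i j : Fin N) :
    Hess (fun z : EuclideanSpace ℝ (Fin N) => ‖z‖ ^ β - 1) x i j
      = β * (β - 2) * ‖x‖ ^ (β - 4) * (x i * x j)
        + β * ‖x‖ ^ (β - 2) * (if i = j then 1 else 0) := by
  have hx' : (0:ℝ) < ‖x‖ := norm_pos_iff.mpr hx
  -- the first derivative in direction `single i 1`
  have hfd : ∀ y : E, y ≠ 0 →
      fderiv ℝ (fun z : E => ‖z‖ ^ β - 1) y = (β * ‖y‖ ^ (β - 2)) • innerSL ℝ y :=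
    fun y hy => ((myHasFDerivAt_norm_rpow β hy).sub_const 1).fderiv
  have hev : (fun y : E => fderiv ℝ (fun z : E => ‖z‖ ^ β - 1) y (EuclideanSpace.single i 1))
      =ᶠ[nhds x] (fun y : E => (β * ‖y‖ ^ (β - 2)) * y i) := by
    filter_upwards [IsOpen.mem_nhds isOpen_compl_singleton (by simpa using hx :
        x ∈ ({0} : Set E)ᶜ)] with y hy
    have hy0 : y ≠ 0 := by simpa using hy
    rw [hfd y hy0]
    simp [EuclideanSpace.inner_single_right]
  -- differentiate again
  have hc : HasFDerivAt (fun y : E => β * ‖y‖ ^ (β - 2))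
      (β • (((β - 2) * ‖x‖ ^ (β - 2 - 2)) • innerSL ℝ x)) x :=
    (myHasFDerivAt_norm_rpow (β - 2) hx).const_mul β
  have hd : HasFDerivAt (fun y : E => y i) (EuclideanSpace.proj (𝕜 := ℝ) i) x :=
    (EuclideanSpace.proj (𝕜 := ℝ) i).hasFDerivAt
  have hmul := hc.mul hd
  have : Hess (fun z : E => ‖z‖ ^ β - 1) x i j
      = fderiv ℝ (fun y : E => (β * ‖y‖ ^ (β - 2)) * y i) x (EuclideanSpace.single j 1) := by
    show fderiv ℝ _ x _ = _
    rw [hev.fderiv_eq]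
  rw [this, show (fun y : E => (β * ‖y‖ ^ (β - 2)) * y i) = (fun y : E => β * ‖y‖ ^ (β - 2)) * (fun y : E => y i) from rfl, hmul.fderiv]
  simp only [ContinuousLinearMap.add_apply, ContinuousLinearMap.smul_apply,
    PiLp.proj_apply, innerSL_apply_apply, smul_eq_mul,
    EuclideanSpace.inner_single_right, EuclideanSpace.single_apply,
    RingHom.id_apply, starRingEnd_apply, star_trivial]
  have h4 : β - 2 - 2 = β - 4 := by ring
  rw [h4]
  rcases eq_or_ne i j with h | h
  · subst h; simp; ring
  · simp [h, Ne.symm h]; ring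

lemma myDetHess (β : ℝ) {x : EuclideanSpace ℝ (Fin N)} (hx : x ≠ 0) :
    (Hess (fun z : EuclideanSpace ℝ (Fin N) => ‖z‖ ^ β - 1) x).det
      = β ^ N * (β - 1) * ‖x‖ ^ ((N : ℝ) * (β - 2)) := by
  have hx' : (0:ℝ) < ‖x‖ := norm_pos_iff.mpr hx
  have hsq : ∑ i, x i ^ 2 = ‖x‖ ^ 2 := by
    rw [EuclideanSpace.norm_eq, sq_sqrt (by positivity)]
    simp [Real.norm_eq_abs, sq_abs]
  have h4 : ‖x‖ ^ (β - 4) = ‖x‖ ^ (β - 2) * ‖x‖ ^ (-2:ℝ) := by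
    rw [← Real.rpow_add hx']; congr 1; ring
  have hinv : ‖x‖ ^ (-2:ℝ) * ‖x‖ ^ 2 = 1 := by
    rw [Real.rpow_neg (norm_nonneg x), ← Real.rpow_natCast ‖x‖ 2]
    push_cast
    rw [inv_mul_cancel₀ (by positivity)]
  have hM : Hess (fun z : EuclideanSpace ℝ (Fin N) => ‖z‖ ^ β - 1) x
      = (β * ‖x‖ ^ (β - 2)) • ((1 : Matrix (Fin N) (Fin N) ℝ)
          + Matrix.replicateCol (Fin 1) (fun i => ((β - 2) * ‖x‖ ^ (-2:ℝ)) * x i)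
            * Matrix.replicateRow (Fin 1) (fun j => x j)) := by
    ext i j
    rw [myHessEntry β hx i j]
    simp only [Matrix.smul_apply, Matrix.add_apply, Matrix.one_apply, Matrix.mul_apply,
      Matrix.replicateCol_apply, Matrix.replicateRow_apply, Finset.univ_unique, Finset.sum_const,
      Finset.card_singleton, one_smul, smul_eq_mul, h4]
    rcases eq_or_ne i j with h | h
    · subst h; simp; ring
    · simp [h]; ring
  rw [hM, Matrix.det_smul]
  erw [Matrix.det_one_add_replicateCol_mul_replicateRow]
  have hdot : dotProduct (fun j => x j) (fun i => ((β - 2) * ‖x‖ ^ (-2:ℝ)) * x i) = β - 2 := by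
    simp only [dotProduct]
    have : ∑ i, x i * (((β - 2) * ‖x‖ ^ (-2:ℝ)) * x i)
        = ((β - 2) * ‖x‖ ^ (-2:ℝ)) * ∑ i, x i ^ 2 := by
      rw [Finset.mul_sum]; congr 1; funext i; ring
    rw [this, hsq, mul_assoc, hinv, mul_one]
  rw [hdot, Fintype.card_fin, mul_pow]
  have hNp : (‖x‖ ^ (β - 2)) ^ N = ‖x‖ ^ ((N:ℝ) * (β - 2)) := by
    rw [mul_comm, Real.rpow_mul (norm_nonneg x), Real.rpow_natCast]
  rw [hNp]
  ring

lemma myIntegrableRpow (hN : 1 ≤ N) {s : ℝ} (hs : -(N:ℝ) < s) :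
    IntegrableOn (fun x : EuclideanSpace ℝ (Fin N) => ‖x‖ ^ s) (ball 0 1) volume := by
  haveI : Nontrivial (EuclideanSpace ℝ (Fin N)) :=
    nontrivial_of_ne (EuclideanSpace.single ⟨0, hN⟩ (1:ℝ)) 0 (by
      intro hh; have := congrArg norm hh; simp at this)
  rcases le_or_gt 0 s with hs0 | hs0
  · -- continuous case
    have hcont : Continuous (fun x : EuclideanSpace ℝ (Fin N) => ‖x‖ ^ s) :=
      continuous_norm.rpow_const (fun x => Or.inr hs0)
    exact ((hcont.continuousOn).integrableOn_compact (isCompact_closedBall _ _)).mono_set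
      ball_subset_closedBall
  · -- singular case
    have hmeas : Measurable (fun x : EuclideanSpace ℝ (Fin N) => ‖x‖ ^ s) :=
      measurable_norm.pow_const s
    refine ⟨hmeas.aestronglyMeasurable, ?_⟩
    rw [hasFiniteIntegral_iff_ofReal (Filter.Eventually.of_forall fun x =>
      Real.rpow_nonneg (norm_nonneg x) s)]
    set r : ℕ → ℝ := fun n => (1/2:ℝ)^n with hr
    have hrpos : ∀ n, 0 < r n := fun n => by positivity
    set S : ℕ → Set (EuclideanSpace ℝ (Fin N)) :=
      fun n => closedBall 0 (r n) \ ball 0 (r (n+1)) with hS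
    have hcover : ball (0 : EuclideanSpace ℝ (Fin N)) 1 ⊆ {0} ∪ ⋃ n, S n := by
      intro x hx
      rcases eq_or_ne x 0 with h | h
      · exact Or.inl (by simp [h])
      · refine Or.inr (Set.mem_iUnion.mpr ?_)
        have hx1 : ‖x‖ < 1 := by simpa [dist_eq_norm] using hx
        have hx0 : 0 < ‖x‖ := norm_pos_iff.mpr h
        have hex : ∃ n, r n < ‖x‖ := exists_pow_lt_of_lt_one hx0 (by norm_num)
        have h0 : ¬ (r 0 < ‖x‖) := by simp [hr]; linarith
        set m := Nat.find hex with hm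
        have hmspec : r m < ‖x‖ := Nat.find_spec hex
        have hm0 : m ≠ 0 := fun h' => h0 (h' ▸ hmspec)
        obtain ⟨k, hk⟩ := Nat.exists_eq_succ_of_ne_zero hm0
        refine ⟨k, ?_, ?_⟩
        · have := Nat.find_min hex (m := k) (by omega)
          simpa [mem_closedBall, dist_eq_norm, not_lt] using (not_lt.mp this)
        · simp only [mem_ball, dist_eq_norm, sub_zero, not_lt]
          have : k + 1 = m := by omega
          rw [this]
          exact hmspec.le
    calc ∫⁻ x in ball (0 : EuclideanSpace ℝ (Fin N)) 1, ENNReal.ofReal (‖x‖ ^ s)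
        ≤ ∫⁻ x in ({0} ∪ ⋃ n, S n : Set (EuclideanSpace ℝ (Fin N))),
            ENNReal.ofReal (‖x‖ ^ s) := lintegral_mono_set hcover
      _ ≤ (∫⁻ x in ({0} : Set (EuclideanSpace ℝ (Fin N))), ENNReal.ofReal (‖x‖ ^ s))
            + ∫⁻ x in (⋃ n, S n), ENNReal.ofReal (‖x‖ ^ s) := lintegral_union_le _ _ _
      _ ≤ 0 + ∑' n, ∫⁻ x in S n, ENNReal.ofReal (‖x‖ ^ s) := by
          gcongr
          · rw [setLIntegral_measure_zero _ _ (measure_singleton 0)]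
          · exact lintegral_iUnion_le _ _
      _ < ⊤ := by
          rw [zero_add]
          have hsN : 0 < s + N := by linarith
          set c : ℝ := (1/2:ℝ) ^ s with hc
          set ρ : ℝ := (1/2:ℝ) ^ (s + (N:ℝ)) with hρ
          have hc0 : 0 ≤ c := Real.rpow_nonneg (by norm_num) s
          have hρ0 : 0 ≤ ρ := Real.rpow_nonneg (by norm_num) _
          have hρ1 : ρ < 1 := Real.rpow_lt_one (by norm_num) (by norm_num) hsN
          have hbound : ∀ n, ∫⁻ x in S n, ENNReal.ofReal (‖x‖ ^ s)
              ≤ ENNReal.ofReal (c * ρ ^ n)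
                * volume (ball (0 : EuclideanSpace ℝ (Fin N)) 1) := by
            intro n
            have h1 : ∫⁻ x in S n, ENNReal.ofReal (‖x‖ ^ s)
                ≤ ∫⁻ _ in S n, ENNReal.ofReal ((r (n+1)) ^ s) := by
              refine setLIntegral_mono measurable_const fun x hx => ?_
              refine ENNReal.ofReal_le_ofReal
                (Real.rpow_le_rpow_of_nonpos (hrpos (n+1)) ?_ hs0.le)
              have := hx.2
              simpa [mem_ball, dist_eq_norm, not_lt] using this
            refine h1.trans ?_
            rw [setLIntegral_const]
            have hvol : volume (S n)
                ≤ ENNReal.ofReal ((r n) ^ N)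
                  * volume (ball (0 : EuclideanSpace ℝ (Fin N)) 1) := by
              refine (measure_mono Set.diff_subset).trans ?_
              rw [Measure.addHaar_closedBall _ _ (hrpos n).le, finrank_euclideanSpace_fin]
            calc ENNReal.ofReal ((r (n+1)) ^ s) * volume (S n)
                ≤ ENNReal.ofReal ((r (n+1)) ^ s)
                  * (ENNReal.ofReal ((r n) ^ N)
                    * volume (ball (0 : EuclideanSpace ℝ (Fin N)) 1)) :=
                  mul_le_mul_right hvol _
              _ = ENNReal.ofReal (c * ρ ^ n)
                  * volume (ball (0 : EuclideanSpace ℝ (Fin N)) 1) := by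
                  rw [← mul_assoc, ← ENNReal.ofReal_mul
                    (Real.rpow_nonneg (hrpos (n+1)).le s)]
                  congr 2
                  have e1 : ((r (n+1)) : ℝ) ^ s = (1/2:ℝ) ^ (((n:ℝ)+1)*s) := by
                    show ((1/2:ℝ)^(n+1) : ℝ) ^ s = _
                    rw [← Real.rpow_natCast (1/2:ℝ) (n+1),
                      ← Real.rpow_mul (by norm_num : (0:ℝ) ≤ 1/2)]
                    push_cast
                    ring_nf
                  have e2 : ((r n) : ℝ) ^ N = (1/2:ℝ) ^ ((n:ℝ)*(N:ℝ)) := by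
                    show (((1/2:ℝ)^n : ℝ)) ^ N = _
                    rw [← pow_mul, ← Real.rpow_natCast (1/2:ℝ) (n*N)]
                    push_cast
                    ring_nf
                  have e3 : ρ ^ n = (1/2:ℝ) ^ ((n:ℝ)*(s+(N:ℝ))) := by
                    rw [hρ, ← Real.rpow_natCast ((1/2:ℝ) ^ (s + (N:ℝ))) n,
                      ← Real.rpow_mul (by norm_num : (0:ℝ) ≤ 1/2)]
                    ring_nf
                  rw [e1, e2, e3, hc, ← Real.rpow_add (by norm_num : (0:ℝ) < 1/2),
                    ← Real.rpow_add (by norm_num : (0:ℝ) < 1/2)]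
                  congr 1
                  ring
          calc (∑' n, ∫⁻ x in S n, ENNReal.ofReal (‖x‖ ^ s))
              ≤ ∑' n, ENNReal.ofReal (c * ρ ^ n)
                * volume (ball (0 : EuclideanSpace ℝ (Fin N)) 1) :=
                ENNReal.tsum_le_tsum hbound
            _ = ENNReal.ofReal c * (1 - ENNReal.ofReal ρ)⁻¹
                * volume (ball (0 : EuclideanSpace ℝ (Fin N)) 1) := by
                rw [ENNReal.tsum_mul_right]
                congr 1
                have : ∀ n : ℕ, ENNReal.ofReal (c * ρ ^ n)
                    = ENNReal.ofReal c * (ENNReal.ofReal ρ) ^ n := fun n => by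
                  rw [ENNReal.ofReal_mul hc0, ENNReal.ofReal_pow hρ0]
                simp_rw [this]
                rw [ENNReal.tsum_mul_left, ENNReal.tsum_geometric]
            _ < ⊤ := by
                have h1 : (1 - ENNReal.ofReal ρ)⁻¹ < ⊤ := by
                  rw [ENNReal.inv_lt_top]
                  exact tsub_pos_iff_lt.mpr (ENNReal.ofReal_lt_one.mpr hρ1)
                exact ENNReal.mul_lt_top
                  (ENNReal.mul_lt_top ENNReal.ofReal_lt_top h1) measure_ball_lt_top

end aux

/-- Counterexample to higher interior regularity. -/
theorem stmt3 (N : ℕ) (hN : 1 ≤ N) (α β : ℝ) (hα : α ∈ Set.Ioo (0:ℝ) 1)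
    (hβ : β ∈ Set.Ioo (1:ℝ) (1 + α))
    (u : EuclideanSpace ℝ (Fin N) → ℝ) (hu : ∀ x, u x = ‖x‖ ^ β - 1) :
    ConvexOn ℝ (ball (0 : EuclideanSpace ℝ (Fin N)) 1) u ∧
    (∀ x : EuclideanSpace ℝ (Fin N), x ≠ 0 →
      (Hess u x).det = β ^ N * (β - 1) * ‖x‖ ^ ((N : ℝ) * (β - 2))) ∧
    IntegrableOn (fun x => (Hess u x).det) (ball (0 : EuclideanSpace ℝ (Fin N)) 1) ∧
    ¬ (∀ x ∈ ball (0 : EuclideanSpace ℝ (Fin N)) 1, ∃ ε > (0:ℝ), ∃ C : NNReal,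
        HolderOnWith C ⟨α, hα.1.le⟩ (gradient u) (ball x ε)) := by
  obtain ⟨hα0, hα1⟩ := hα
  obtain ⟨hβ1, hβα⟩ := hβ
  have hu' : u = fun x => ‖x‖ ^ β - 1 := funext hu
  subst hu'
  have hNpos : (0:ℝ) < N := by exact_mod_cast hN
  refine ⟨?_, fun x hx => myDetHess β hx, ?_, ?_⟩
  · -- convexity
    refine ⟨convex_ball 0 1, fun x hx y hy a b ha hb hab => ?_⟩
    simp only [smul_eq_mul]
    have h1 : ‖a • x + b • y‖ ≤ a * ‖x‖ + b * ‖y‖ := by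
      calc ‖a • x + b • y‖ ≤ ‖a • x‖ + ‖b • y‖ := norm_add_le _ _
        _ = a * ‖x‖ + b * ‖y‖ := by
            rw [norm_smul, norm_smul, Real.norm_eq_abs, Real.norm_eq_abs,
              abs_of_nonneg ha, abs_of_nonneg hb]
    have h2 : ‖a • x + b • y‖ ^ β ≤ (a * ‖x‖ + b * ‖y‖) ^ β :=
      Real.rpow_le_rpow (norm_nonneg _) h1 (by linarith)
    have h3 := (convexOn_rpow hβ1.le).2 (Set.mem_Ici.mpr (norm_nonneg x))
      (Set.mem_Ici.mpr (norm_nonneg y)) ha hb hab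
    simp only [smul_eq_mul] at h3
    have h4 := h2.trans h3
    have expand : a * (‖x‖ ^ β - 1) + b * (‖y‖ ^ β - 1)
        = a * ‖x‖ ^ β + b * ‖y‖ ^ β - 1 := by linear_combination (-1 : ℝ) * hab
    rw [expand]
    linarith
  · -- integrability of the Hessian determinant
    haveI : Nontrivial (EuclideanSpace ℝ (Fin N)) :=
      nontrivial_of_ne (EuclideanSpace.single ⟨0, hN⟩ (1:ℝ)) 0 (by
        intro hh; have := congrArg norm hh; simp at this)
    have hexp : -(N:ℝ) < (N:ℝ) * (β - 2) := by nlinarith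
    have hint := (myIntegrableRpow hN hexp).const_mul (β ^ N * (β - 1))
    refine hint.congr ?_
    have hae : ∀ᵐ x ∂(volume : Measure (EuclideanSpace ℝ (Fin N))), x ≠ 0 := by
      rw [ae_iff]
      have : {x : EuclideanSpace ℝ (Fin N) | ¬ x ≠ 0} = {0} := by
        ext z; simp
      rw [this]
      exact measure_singleton 0
    exact ae_restrict_of_ae (hae.mono fun x hx => (myDetHess β hx).symm)
  · -- failure of Hölder continuity of the gradient
    intro hcon
    obtain ⟨ε, hε, C, hC⟩ := hcon 0 (mem_ball_self one_pos)
    set f : (EuclideanSpace ℝ (Fin N)) → ℝ := fun x => ‖x‖ ^ β - 1 with hf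
    set e : (EuclideanSpace ℝ (Fin N)) := EuclideanSpace.single (⟨0, hN⟩ : Fin N) (1:ℝ) with he
    have hene : ‖e‖ = 1 := by simp [he, EuclideanSpace.norm_single]
    -- gradient at nonzero points
    have hgrad : ∀ x : (EuclideanSpace ℝ (Fin N)), x ≠ 0 → gradient f x = (β * ‖x‖ ^ (β - 2)) • x := by
      intro x hx
      have hfd : fderiv ℝ f x = (β * ‖x‖ ^ (β - 2)) • innerSL ℝ x :=
        ((myHasFDerivAt_norm_rpow β hx).sub_const 1).fderiv
      have hdual : (InnerProductSpace.toDual ℝ (EuclideanSpace ℝ (Fin N))) ((β * ‖x‖ ^ (β - 2)) • x)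
          = (β * ‖x‖ ^ (β - 2)) • innerSL ℝ x := by
        ext v
        simp [InnerProductSpace.toDual_apply_apply, inner_smul_left]
      rw [gradient, hfd, ← hdual, LinearIsometryEquiv.symm_apply_apply]
    -- gradient at zero
    have hgrad0 : gradient f 0 = 0 := by
      have h0 : HasFDerivAt f (0 : (EuclideanSpace ℝ (Fin N)) →L[ℝ] ℝ) 0 := by
        rw [hasFDerivAt_iff_tendsto]
        have hfun : ∀ x' : (EuclideanSpace ℝ (Fin N)), ‖x' - 0‖⁻¹ * ‖f x' - f 0 - (0 : (EuclideanSpace ℝ (Fin N)) →L[ℝ] ℝ) (x' - 0)‖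
            = ‖x'‖ ^ (β - 1) := by
          intro x'
          simp only [hf, sub_zero, ContinuousLinearMap.zero_apply, norm_zero,
            Real.zero_rpow (by linarith : β ≠ 0), zero_sub, sub_neg_eq_add,
            sub_add_cancel]
          rw [Real.norm_eq_abs, abs_of_nonneg (Real.rpow_nonneg (norm_nonneg x') β)]
          rcases eq_or_ne x' 0 with h | h
          · simp [h, Real.zero_rpow (by linarith : β ≠ 0),
              Real.zero_rpow (by linarith : β - 1 ≠ 0)]
          · have hx' : (0:ℝ) < ‖x'‖ := norm_pos_iff.mpr h
            rw [show β - 1 = -1 + β by ring, Real.rpow_add hx', Real.rpow_neg_one]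
        refine Filter.Tendsto.congr (fun x' => (hfun x').symm) ?_
        have hcont : Filter.Tendsto (fun t : ℝ => t ^ (β - 1)) (nhds 0) (nhds 0) := by
          have := (Real.continuousAt_rpow_const 0 (β - 1)
            (Or.inr (by linarith))).tendsto
          rwa [Real.zero_rpow (by linarith : β - 1 ≠ 0)] at this
        exact hcont.comp tendsto_norm_zero
      rw [gradient, h0.fderiv, map_zero]
    -- the key inequality along the segment
    have hkey : ∀ t : ℝ, 0 < t → t < ε → β * t ^ (β - 1) ≤ (C:ℝ) * t ^ α := by
      intro t ht htε
      have he0 : e ≠ 0 := norm_ne_zero_iff.mp (by rw [hene]; exact one_ne_zero)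
      have hte : (t • e : (EuclideanSpace ℝ (Fin N))) ≠ 0 := smul_ne_zero ht.ne' he0
      have hmem1 : (t • e : (EuclideanSpace ℝ (Fin N))) ∈ ball (0:(EuclideanSpace ℝ (Fin N))) ε := by
        rw [mem_ball, dist_eq_norm, sub_zero, norm_smul, hene, Real.norm_eq_abs,
          abs_of_pos ht, mul_one]
        exact htε
      have hmem0 : (0:(EuclideanSpace ℝ (Fin N))) ∈ ball (0:(EuclideanSpace ℝ (Fin N))) ε := mem_ball_self hε
      have hedist := hC.edist_le hmem1 hmem0
      have hnorm_te : ‖(t • e : (EuclideanSpace ℝ (Fin N)))‖ = t := by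
        rw [norm_smul, hene, Real.norm_eq_abs, abs_of_pos ht, mul_one]
      have hpos : (0:ℝ) < β * t ^ (β - 2) :=
        mul_pos (by linarith) (Real.rpow_pos_of_pos ht _)
      have hgnorm : ‖gradient f (t • e)‖ = β * t ^ (β - 1) := by
        rw [hgrad _ hte, norm_smul, hnorm_te, Real.norm_eq_abs, abs_of_pos hpos]
        rw [show β - 1 = (β - 2) + 1 by ring, Real.rpow_add ht, Real.rpow_one]
        ring
      rw [hgrad0] at hedist
      have hed1 : edist (gradient f (t • e)) (0:(EuclideanSpace ℝ (Fin N))) = ENNReal.ofReal (β * t ^ (β - 1)) := by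
        rw [edist_dist, dist_zero_right, hgnorm]
      have hed2 : edist (t • e : (EuclideanSpace ℝ (Fin N))) (0:(EuclideanSpace ℝ (Fin N))) = ENNReal.ofReal t := by
        rw [edist_dist, dist_zero_right, hnorm_te]
      rw [hed1, hed2] at hedist
      rw [ENNReal.ofReal_rpow_of_pos ht, ← ENNReal.ofReal_coe_nnreal,
        ← ENNReal.ofReal_mul C.coe_nonneg] at hedist
      exact (ENNReal.ofReal_le_ofReal_iff (by positivity)).mp hedist
    -- contradiction by letting t → 0⁺
    have h1 : Filter.Tendsto (fun t : ℝ => β * t ^ (β - 1 - α)) (nhdsWithin 0 (Set.Ioi 0))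
        Filter.atTop := by
      have h3 : Filter.Tendsto (fun t : ℝ => t⁻¹) (nhdsWithin (0:ℝ) (Set.Ioi 0))
          Filter.atTop := tendsto_inv_nhdsGT_zero
      have h4 := (tendsto_rpow_atTop (y := α + 1 - β) (by linarith)).comp h3
      have h2 : Filter.Tendsto (fun t : ℝ => t ^ (β - 1 - α)) (nhdsWithin (0:ℝ) (Set.Ioi 0))
          Filter.atTop := by
        refine h4.congr' ?_
        filter_upwards [self_mem_nhdsWithin] with t ht
        have ht' : (0:ℝ) < t := ht
        show (t⁻¹) ^ (α + 1 - β) = t ^ (β - 1 - α)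
        rw [Real.inv_rpow ht'.le, ← Real.rpow_neg ht'.le]
        congr 1
        ring
      exact h2.const_mul_atTop (by linarith : (0:ℝ) < β)
    have h5 : ∀ᶠ t in nhdsWithin (0:ℝ) (Set.Ioi 0), (C:ℝ) < β * t ^ (β - 1 - α) :=
      h1.eventually_gt_atTop C
    have h6 : Set.Ioo (0:ℝ) ε ∈ nhdsWithin (0:ℝ) (Set.Ioi 0) :=
      Ioo_mem_nhdsGT_of_mem ⟨le_refl 0, hε⟩
    obtain ⟨t, ht1, ht2⟩ := (h5.and (Filter.eventually_mem_set.mpr h6)).exists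
    obtain ⟨ht0, htε⟩ := ht2
    have hk := hkey t ht0 htε
    have hsplit : t ^ (β - 1) = t ^ (β - 1 - α) * t ^ α := by
      rw [← Real.rpow_add ht0]
      congr 1
      ring
    rw [hsplit, ← mul_assoc] at hk
    have htα : (0:ℝ) < t ^ α := Real.rpow_pos_of_pos ht0 α
    have := (mul_le_mul_iff_left₀ htα).mp hk
    linarith
end

section
/- Let u(x) = ζ(x₁)|x'|² - η(x₁) for x = (x₁, x') ∈ ℝ × ℝ^n, with ζ, η twice differentiable and ζ > 0. Then the Hessian determinant satisfies det D²u = (2ζ)^n [ζ''|x'|² - η'' - (2ζ'²/ζ)|x'|²]. -/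
open MeasureTheory Metric Real

def splitEquiv (n : ℕ) : Fin (n + 1) ≃ Fin 1 ⊕ Fin n where
  toFun := Fin.cases (Sum.inl 0) Sum.inr
  invFun := Sum.elim (fun _ => (0 : Fin (n + 1))) Fin.succ
  left_inv i := by induction i using Fin.cases <;> simp
  right_inv s := by
    rcases s with s | k
    · simp [Subsingleton.elim s 0]
    · simp

/-- Hessian determinant of the ansatz. -/
theorem stmt5 (n : ℕ) (ζ η : ℝ → ℝ) (hζ : ContDiff ℝ 2 ζ) (hη : ContDiff ℝ 2 η)
    (hζpos : ∀ t, 0 < ζ t)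
    (u : EuclideanSpace ℝ (Fin (n + 1)) → ℝ)
    (hu : ∀ x, u x = ζ (x 0) * (∑ i : Fin n, (x i.succ) ^ 2) - η (x 0))
    (x : EuclideanSpace ℝ (Fin (n + 1))) :
    (Hess u x).det =
      (2 * ζ (x 0)) ^ n *
        (deriv (deriv ζ) (x 0) * (∑ i : Fin n, (x i.succ) ^ 2)
          - deriv (deriv η) (x 0)
          - 2 * (deriv ζ (x 0)) ^ 2 / ζ (x 0) * (∑ i : Fin n, (x i.succ) ^ 2)) := by
  have hu' : u = fun y => ζ (y 0) * (∑ i : Fin n, (y i.succ) ^ 2) - η (y 0) := funext hu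
  subst hu'
  set P : Fin (n + 1) → ((EuclideanSpace ℝ (Fin (n + 1))) →L[ℝ] ℝ) := fun i => EuclideanSpace.proj i with hP
  have hζ2 : ContDiff ℝ (1 + 1) ζ := by norm_num; exact hζ
  have hη2 : ContDiff ℝ (1 + 1) η := by norm_num; exact hη
  have hζ1 : Differentiable ℝ ζ := hζ2.differentiable (by norm_num)
  have hη1 : Differentiable ℝ η := hη2.differentiable (by norm_num)
  have hζd : Differentiable ℝ (deriv ζ) :=
    ((contDiff_succ_iff_deriv.mp hζ2).2.2).differentiable (by norm_num)
  have hηd : Differentiable ℝ (deriv η) :=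
    ((contDiff_succ_iff_deriv.mp hη2).2.2).differentiable (by norm_num)
  set S : (EuclideanSpace ℝ (Fin (n + 1))) → ℝ := fun y => ∑ i : Fin n, (y i.succ) ^ 2 with hSdef
  set DS : (EuclideanSpace ℝ (Fin (n + 1))) → ((EuclideanSpace ℝ (Fin (n + 1))) →L[ℝ] ℝ) := fun y => ∑ i : Fin n, (2 * y i.succ) • P i.succ with hDS
  have hS : ∀ y : (EuclideanSpace ℝ (Fin (n + 1))), HasFDerivAt S (DS y) y := by
    intro y
    have h : ∀ i : Fin n, HasFDerivAt (fun z : (EuclideanSpace ℝ (Fin (n + 1))) => (z i.succ) ^ 2)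
        ((2 * y i.succ) • P i.succ) y := by
      intro i
      have h1 : HasFDerivAt (fun z : (EuclideanSpace ℝ (Fin (n + 1))) => z i.succ * z i.succ)
          (y i.succ • P i.succ + y i.succ • P i.succ) y :=
        (P i.succ).hasFDerivAt.mul (P i.succ).hasFDerivAt
      have e1 : (2 * y i.succ) • P i.succ
          = y i.succ • P i.succ + y i.succ • P i.succ := by
        rw [two_mul, add_smul]
      rw [e1]
      simpa [pow_two] using h1
    simpa [hSdef, hDS] using HasFDerivAt.fun_sum (u := Finset.univ) (fun i _ => h i)
  have hPapp : ∀ (i j : Fin (n+1)), P i (EuclideanSpace.single j (1:ℝ))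
      = if i = j then 1 else 0 := by
    intro i j
    show EuclideanSpace.single j (1:ℝ) i = _
    rw [EuclideanSpace.single_apply]
  have hP00 : P 0 (EuclideanSpace.single (0 : Fin (n+1)) (1:ℝ)) = 1 := by
    rw [hPapp]; simp
  have hP0s : ∀ k : Fin n, P 0 (EuclideanSpace.single k.succ (1:ℝ)) = 0 := by
    intro k; rw [hPapp]; simp [(Fin.succ_ne_zero k).symm]
  have hPs0 : ∀ k : Fin n, P k.succ (EuclideanSpace.single (0 : Fin (n+1)) (1:ℝ)) = 0 := by
    intro k; rw [hPapp]; simp [Fin.succ_ne_zero k]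
  have hPss : ∀ k m : Fin n, P k.succ (EuclideanSpace.single m.succ (1:ℝ))
      = if k = m then 1 else 0 := by
    intro k m; rw [hPapp]; simp [Fin.succ_inj, eq_comm]
  set Du : (EuclideanSpace ℝ (Fin (n + 1))) → ((EuclideanSpace ℝ (Fin (n + 1))) →L[ℝ] ℝ) := fun y =>
    (ζ (y 0) • DS y + S y • (deriv ζ (y 0) • P 0)) - deriv η (y 0) • P 0 with hDu
  have hz : ∀ y : (EuclideanSpace ℝ (Fin (n + 1))), HasFDerivAt (fun z : (EuclideanSpace ℝ (Fin (n + 1))) => ζ (z 0)) (deriv ζ (y 0) • P 0) y :=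
    fun y => HasDerivAt.comp_hasFDerivAt y ((hζ1 (y 0)).hasDerivAt) (P 0).hasFDerivAt
  have hh : ∀ y : (EuclideanSpace ℝ (Fin (n + 1))), HasFDerivAt (fun z : (EuclideanSpace ℝ (Fin (n + 1))) => η (z 0)) (deriv η (y 0) • P 0) y :=
    fun y => HasDerivAt.comp_hasFDerivAt y ((hη1 (y 0)).hasDerivAt) (P 0).hasFDerivAt
  have hU : ∀ y : (EuclideanSpace ℝ (Fin (n + 1))), HasFDerivAt (fun z : (EuclideanSpace ℝ (Fin (n + 1))) => ζ (z 0) * S z - η (z 0)) (Du y) y :=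
    fun y => ((hz y).mul (hS y)).sub (hh y)
  have hfd : ∀ y : (EuclideanSpace ℝ (Fin (n + 1))), fderiv ℝ (fun z : (EuclideanSpace ℝ (Fin (n + 1))) => ζ (z 0) * S z - η (z 0)) y = Du y :=
    fun y => (hU y).fderiv
  -- evaluation of Du on basis vectors
  have hDu0 : ∀ y : (EuclideanSpace ℝ (Fin (n + 1))), Du y (EuclideanSpace.single 0 1)
      = deriv ζ (y 0) * S y - deriv η (y 0) := by
    intro y
    simp [hDu, hDS, ContinuousLinearMap.sum_apply, hP00, hP0s, hPs0, hPss]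
    ring
  have hDus : ∀ (k : Fin n) (y : (EuclideanSpace ℝ (Fin (n + 1)))), Du y (EuclideanSpace.single k.succ 1)
      = ζ (y 0) * (2 * y k.succ) := by
    intro k y
    simp [hDu, hDS, ContinuousLinearMap.sum_apply, hP00, hP0s, hPs0, hPss,
      Finset.mul_sum, mul_ite]
  -- second derivatives
  set Dg0 : (EuclideanSpace ℝ (Fin (n + 1))) →L[ℝ] ℝ :=
    (deriv ζ (x 0) • DS x + S x • (deriv (deriv ζ) (x 0) • P 0))
      - deriv (deriv η) (x 0) • P 0 with hDg0
  have hG0 : HasFDerivAt (fun y : (EuclideanSpace ℝ (Fin (n + 1))) => deriv ζ (y 0) * S y - deriv η (y 0)) Dg0 x := by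
    refine HasFDerivAt.sub (HasFDerivAt.mul ?_ (hS x)) ?_
    · exact HasDerivAt.comp_hasFDerivAt x ((hζd (x 0)).hasDerivAt) (P 0).hasFDerivAt
    · exact HasDerivAt.comp_hasFDerivAt x ((hηd (x 0)).hasDerivAt) (P 0).hasFDerivAt
  set Dgk : Fin n → ((EuclideanSpace ℝ (Fin (n + 1))) →L[ℝ] ℝ) := fun k =>
    ζ (x 0) • ((2 : ℝ) • P k.succ) + (2 * x k.succ) • (deriv ζ (x 0) • P 0) with hDgk
  have hGk : ∀ k : Fin n,
      HasFDerivAt (fun y : (EuclideanSpace ℝ (Fin (n + 1))) => ζ (y 0) * (2 * y k.succ)) (Dgk k) x :=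
    fun k => (hz x).mul ((P k.succ).hasFDerivAt.const_mul 2)
  -- the four kinds of Hessian entries
  have entry : ∀ i j : Fin (n + 1),
      Hess (fun z : (EuclideanSpace ℝ (Fin (n + 1))) => ζ (z 0) * S z - η (z 0)) x i j
        = fderiv ℝ (fun y : (EuclideanSpace ℝ (Fin (n + 1))) => Du y (EuclideanSpace.single i 1)) x
            (EuclideanSpace.single j 1) := by
    intro i j
    have : (fun y : (EuclideanSpace ℝ (Fin (n + 1))) => fderiv ℝ (fun z : (EuclideanSpace ℝ (Fin (n + 1))) => ζ (z 0) * S z - η (z 0)) y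
        (EuclideanSpace.single i 1)) = fun y : (EuclideanSpace ℝ (Fin (n + 1))) => Du y (EuclideanSpace.single i 1) :=
      funext fun y => by rw [hfd y]
    simp only [Hess, this]
  have row0 : (fun y : (EuclideanSpace ℝ (Fin (n + 1))) => Du y (EuclideanSpace.single 0 1))
      = fun y : (EuclideanSpace ℝ (Fin (n + 1))) => deriv ζ (y 0) * S y - deriv η (y 0) := funext hDu0
  have rows : ∀ k : Fin n, (fun y : (EuclideanSpace ℝ (Fin (n + 1))) => Du y (EuclideanSpace.single k.succ 1))
      = fun y : (EuclideanSpace ℝ (Fin (n + 1))) => ζ (y 0) * (2 * y k.succ) := fun k => funext (hDus k)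
  have E00 : Hess (fun z : (EuclideanSpace ℝ (Fin (n + 1))) => ζ (z 0) * S z - η (z 0)) x 0 0
      = deriv (deriv ζ) (x 0) * S x - deriv (deriv η) (x 0) := by
    rw [entry, row0, hG0.fderiv]
    simp [hDg0, hDS, ContinuousLinearMap.sum_apply, hP00, hP0s, hPs0, hPss]
    ring
  have E0s : ∀ m : Fin n, Hess (fun z : (EuclideanSpace ℝ (Fin (n + 1))) => ζ (z 0) * S z - η (z 0)) x 0 m.succ
      = 2 * deriv ζ (x 0) * x m.succ := by
    intro m
    rw [entry, row0, hG0.fderiv]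
    simp [hDg0, hDS, ContinuousLinearMap.sum_apply, hP00, hP0s, hPs0, hPss,
      Finset.mul_sum, mul_ite]
    ring
  have Es0 : ∀ k : Fin n, Hess (fun z : (EuclideanSpace ℝ (Fin (n + 1))) => ζ (z 0) * S z - η (z 0)) x k.succ 0
      = 2 * deriv ζ (x 0) * x k.succ := by
    intro k
    rw [entry, rows k, (hGk k).fderiv]
    simp [hDgk, hP00, hP0s, hPs0, hPss]
    ring
  have Ess : ∀ k m : Fin n, Hess (fun z : (EuclideanSpace ℝ (Fin (n + 1))) => ζ (z 0) * S z - η (z 0)) x k.succ m.succ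
      = if k = m then 2 * ζ (x 0) else 0 := by
    intro k m
    rw [entry, rows k, (hGk k).fderiv]
    by_cases hkm : k = m
    · subst hkm
      simp [hDgk, hP00, hP0s, hPs0, hPss]
      ring
    · simp [hDgk, hP00, hP0s, hPs0, hPss, hkm]
  -- assemble the Hessian as a block matrix
  set a : ℝ := deriv (deriv ζ) (x 0) * S x - deriv (deriv η) (x 0) with ha
  set b : Fin n → ℝ := fun k => 2 * deriv ζ (x 0) * x k.succ with hb
  set c : ℝ := 2 * ζ (x 0) with hc
  have hcne : c ≠ 0 := by
    have := hζpos (x 0); positivity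
  set A : Matrix (Fin 1) (Fin 1) ℝ := Matrix.of fun _ _ => a with hA
  set B : Matrix (Fin 1) (Fin n) ℝ := Matrix.of fun _ k => b k with hB
  set C : Matrix (Fin n) (Fin 1) ℝ := Matrix.of fun k _ => b k with hC
  set D : Matrix (Fin n) (Fin n) ℝ := c • (1 : Matrix (Fin n) (Fin n) ℝ) with hD
  have hM : Hess (fun z : (EuclideanSpace ℝ (Fin (n + 1))) => ζ (z 0) * S z - η (z 0)) x
      = (Matrix.fromBlocks A B C D).submatrix (splitEquiv n) (splitEquiv n) := by
    ext i j
    rw [Matrix.submatrix_apply]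
    induction i using Fin.cases with
    | zero =>
      induction j using Fin.cases with
      | zero =>
        rw [E00]
        simp [splitEquiv, hA, ha]
      | succ m =>
        rw [E0s m]
        simp [splitEquiv, hB, hb]
    | succ k =>
      induction j using Fin.cases with
      | zero =>
        rw [Es0 k]
        simp [splitEquiv, hC, hb]
      | succ m =>
        rw [Ess k m]
        by_cases hkm : k = m <;>
          simp [splitEquiv, hD, hc, Matrix.one_apply, hkm]
  haveI : Invertible D := by
    refine ⟨c⁻¹ • (1 : Matrix (Fin n) (Fin n) ℝ), ?_, ?_⟩
    · rw [hD, smul_mul_assoc, one_mul, smul_smul, inv_mul_cancel₀ hcne, one_smul]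
    · rw [hD, smul_mul_assoc, one_mul, smul_smul, mul_inv_cancel₀ hcne, one_smul]
  have hinv : ⅟D = c⁻¹ • (1 : Matrix (Fin n) (Fin n) ℝ) := by
    refine invOf_eq_right_inv ?_
    rw [hD, smul_mul_assoc, one_mul, smul_smul, mul_inv_cancel₀ hcne, one_smul]
  have hM' : Hess (fun y : (EuclideanSpace ℝ (Fin (n + 1))) => ζ (y 0) * (∑ i : Fin n, (y i.succ) ^ 2) - η (y 0)) x
      = (Matrix.fromBlocks A B C D).submatrix (splitEquiv n) (splitEquiv n) := hM
  rw [hM', Matrix.det_submatrix_equiv_self, Matrix.det_fromBlocks₂₂, hinv]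
  have hdetD : D.det = c ^ n := by
    rw [hD, Matrix.det_smul, Matrix.det_one, Fintype.card_fin, mul_one]
  have hschur : (A - B * (c⁻¹ • (1 : Matrix (Fin n) (Fin n) ℝ)) * C).det
      = a - c⁻¹ * ∑ k : Fin n, b k * b k := by
    rw [Matrix.det_fin_one]
    have hBC : (B * (c⁻¹ • (1 : Matrix (Fin n) (Fin n) ℝ)) * C) 0 0
        = ∑ j : Fin n, (b j * c⁻¹) * b j := by
      simp [Matrix.mul_apply, Matrix.one_apply, hB, hC, mul_ite,
        Finset.sum_ite_eq, Finset.sum_ite_eq']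
      exact Finset.sum_congr rfl fun k _ => by ring
    have h2 : c⁻¹ * ∑ k : Fin n, b k * b k = ∑ j : Fin n, (b j * c⁻¹) * b j := by
      rw [Finset.mul_sum]
      exact Finset.sum_congr rfl fun k _ => by ring
    rw [h2, Matrix.sub_apply, hBC, hA]
    simp
  rw [hdetD, hschur]
  have hsum : ∑ k : Fin n, b k * b k = 4 * (deriv ζ (x 0))^2 * S x := by
    rw [show S x = ∑ i : Fin n, (x i.succ) ^ 2 from rfl, Finset.mul_sum]
    refine Finset.sum_congr rfl fun k _ => ?_
    rw [hb]; ring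
  rw [hsum, ha, hc, show S x = ∑ i : Fin n, (x i.succ) ^ 2 from rfl]
  have hz0 : ζ (x 0) ≠ 0 := ne_of_gt (hζpos (x 0))
  field_simp
  ring
end

section
/- Suppose ζ, η : (0,ω) → ℝ satisfy ζ > 0, ζ'' - 2ζ'²/ζ < 0, and (ζ''/ζ - 2ζ'²/ζ²)η - η'' ≥ 0 with η > 0 on (0,ω). Then the function u(x) = ζ(x₁)|x'|² - η(x₁) is convex on the domain Ω = {x : x₁ ∈ (0,ω), ζ(x₁)|x'|² - η(x₁) < 0}. -/
open MeasureTheory Metric Real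

section AuxStmt6
open Set

lemma aux_hd1 {ω : ℝ} {f : ℝ → ℝ} (hf : ContDiffOn ℝ 2 f (Set.Ioo 0 ω)) :
    ∀ s ∈ Set.Ioo (0:ℝ) ω, HasDerivAt f (deriv f s) s := fun s hs =>
  ((hf.differentiableOn (by norm_num)).differentiableAt
    (isOpen_Ioo.mem_nhds hs)).hasDerivAt

lemma aux_hd2 {ω : ℝ} {f : ℝ → ℝ} (hf : ContDiffOn ℝ 2 f (Set.Ioo 0 ω)) :
    ∀ s ∈ Set.Ioo (0:ℝ) ω, HasDerivAt (deriv f) (deriv (deriv f) s) s := fun s hs =>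
  (((hf.deriv_of_isOpen (m := 1) isOpen_Ioo (by norm_num)).differentiableOn
    (by norm_num)).differentiableAt (isOpen_Ioo.mem_nhds hs)).hasDerivAt

noncomputable def auxw1 (ζ η : ℝ → ℝ) (t : ℝ) : ℝ :=
  (deriv η t * ζ t - η t * deriv ζ t) / ζ t ^ 2

noncomputable def auxw2 (ζ η : ℝ → ℝ) (t : ℝ) : ℝ :=
  ((deriv (deriv η) t * ζ t - η t * deriv (deriv ζ) t) * ζ t ^ 2
    - (deriv η t * ζ t - η t * deriv ζ t) * (2 * ζ t * deriv ζ t)) / (ζ t ^ 2) ^ 2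

noncomputable def auxg1 (ζ η : ℝ → ℝ) (t : ℝ) : ℝ :=
  auxw1 ζ η t / (2 * √(η t / ζ t))

noncomputable def auxg2 (ζ η : ℝ → ℝ) (t : ℝ) : ℝ :=
  (auxw2 ζ η t * (2 * √(η t / ζ t))
    - auxw1 ζ η t * (2 * (auxw1 ζ η t / (2 * √(η t / ζ t))))) / (2 * √(η t / ζ t)) ^ 2

lemma concave_g (ω : ℝ) (ζ η : ℝ → ℝ)
    (hζ : ContDiffOn ℝ 2 ζ (Set.Ioo 0 ω)) (hη : ContDiffOn ℝ 2 η (Set.Ioo 0 ω))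
    (hζpos : ∀ t ∈ Set.Ioo (0:ℝ) ω, 0 < ζ t)
    (hηpos : ∀ t ∈ Set.Ioo (0:ℝ) ω, 0 < η t)
    (h2 : ∀ t ∈ Set.Ioo (0:ℝ) ω,
      (deriv (deriv ζ) t / ζ t - 2 * (deriv ζ t) ^ 2 / (ζ t) ^ 2) * η t
        - deriv (deriv η) t ≥ 0) :
    ConcaveOn ℝ (Set.Ioo 0 ω) (fun t => √(η t / ζ t)) := by
  have hint : interior (Set.Ioo (0:ℝ) ω) = Set.Ioo 0 ω := isOpen_Ioo.interior_eq
  have hwd : ∀ s ∈ Set.Ioo (0:ℝ) ω,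
      HasDerivAt (fun t => η t / ζ t) (auxw1 ζ η s) s := by
    intro s hs
    exact (aux_hd1 hη s hs).div (aux_hd1 hζ s hs) (hζpos s hs).ne'
  have hwpos : ∀ s ∈ Set.Ioo (0:ℝ) ω, 0 < η s / ζ s := fun s hs =>
    div_pos (hηpos s hs) (hζpos s hs)
  have hgd : ∀ s ∈ Set.Ioo (0:ℝ) ω,
      HasDerivAt (fun t => √(η t / ζ t)) (auxg1 ζ η s) s := by
    intro s hs
    exact (hwd s hs).sqrt (hwpos s hs).ne'
  have hg1d : ∀ s ∈ Set.Ioo (0:ℝ) ω, HasDerivAt (auxg1 ζ η) (auxg2 ζ η s) s := by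
    intro s hs
    have hz := hζpos s hs
    have hN : HasDerivAt (fun t => deriv η t * ζ t - η t * deriv ζ t)
        (deriv (deriv η) s * ζ s + deriv η s * deriv ζ s
          - (deriv η s * deriv ζ s + η s * deriv (deriv ζ) s)) s :=
      ((aux_hd2 hη s hs).mul (aux_hd1 hζ s hs)).sub
        ((aux_hd1 hη s hs).mul (aux_hd2 hζ s hs))
    have hZ2 : HasDerivAt (fun t => ζ t ^ 2) (2 * ζ s * deriv ζ s) s := by
      have := (aux_hd1 hζ s hs).pow 2
      refine this.congr_deriv ?_
      push_cast
      ring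
    have hw1d : HasDerivAt (auxw1 ζ η) (auxw2 ζ η s) s := by
      have := hN.div hZ2 (pow_ne_zero 2 hz.ne')
      refine this.congr_deriv ?_
      unfold auxw2
      ring
    have hden : HasDerivAt (fun t => 2 * √(η t / ζ t))
        (2 * auxg1 ζ η s) s := (hgd s hs).const_mul 2
    have hne : 2 * √(η s / ζ s) ≠ 0 := by
      have := Real.sqrt_pos.2 (hwpos s hs)
      positivity
    have := hw1d.div hden hne
    exact this.congr_deriv rfl
  apply concaveOn_of_hasDerivWithinAt2_nonpos (convex_Ioo 0 ω)
    (f' := auxg1 ζ η) (f'' := auxg2 ζ η)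
  · exact ((hη.continuousOn.div hζ.continuousOn
      (fun t ht => (hζpos t ht).ne')).sqrt)
  · intro s hs
    rw [hint] at hs ⊢
    exact (hgd s hs).hasDerivWithinAt
  · intro s hs
    rw [hint] at hs ⊢
    exact (hg1d s hs).hasDerivWithinAt
  · intro s hs
    rw [hint] at hs
    have hz := hζpos s hs
    have he := hηpos s hs
    have hw := hwpos s hs
    have hr : 0 < √(η s / ζ s) := Real.sqrt_pos.2 hw
    have hr2 : √(η s / ζ s) ^ 2 = η s / ζ s := Real.sq_sqrt hw.le
    have h2' : 0 ≤ (deriv (deriv ζ) s * ζ s - 2 * deriv ζ s ^ 2) * η s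
        - deriv (deriv η) s * ζ s ^ 2 := by
      have h := h2 s hs
      rw [ge_iff_le, sub_nonneg] at h
      have h' := mul_le_mul_of_nonneg_right h (sq_nonneg (ζ s))
      calc (0:ℝ) ≤ ((deriv (deriv ζ) s / ζ s - 2 * deriv ζ s ^ 2 / ζ s ^ 2) * η s) * ζ s ^ 2
            - deriv (deriv η) s * ζ s ^ 2 := by linarith
        _ = (deriv (deriv ζ) s * ζ s - 2 * deriv ζ s ^ 2) * η s
            - deriv (deriv η) s * ζ s ^ 2 := by field_simp
    have key : 2 * (η s / ζ s) * auxw2 ζ η s ≤ (auxw1 ζ η s) ^ 2 := by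
      have expand : (auxw1 ζ η s) ^ 2 - 2 * (η s / ζ s) * auxw2 ζ η s
          = ((deriv η s * ζ s + η s * deriv ζ s) ^ 2
            + 2 * η s * ((deriv (deriv ζ) s * ζ s - 2 * deriv ζ s ^ 2) * η s
              - deriv (deriv η) s * ζ s ^ 2)) / ζ s ^ 4 := by
        unfold auxw1 auxw2
        field_simp
        ring
      have hnum : 0 ≤ (deriv η s * ζ s + η s * deriv ζ s) ^ 2
            + 2 * η s * ((deriv (deriv ζ) s * ζ s - 2 * deriv ζ s ^ 2) * η s
              - deriv (deriv η) s * ζ s ^ 2) :=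
        add_nonneg (sq_nonneg _) (mul_nonneg (by linarith) h2')
      nlinarith [div_nonneg hnum (by positivity : (0:ℝ) ≤ ζ s ^ 4)]
    unfold auxg2
    apply div_nonpos_of_nonpos_of_nonneg _ (sq_nonneg _)
    have hmm : auxw1 ζ η s * (2 * (auxw1 ζ η s / (2 * √(η s / ζ s))))
        = auxw1 ζ η s ^ 2 / √(η s / ζ s) := by
      field_simp
    rw [hmm, sub_nonpos]
    rw [le_div_iff₀ hr]
    nlinarith [hr2, hr, key]

noncomputable def auxc (p q t : ℝ) : ℝ := p + t * (q - p)

noncomputable def auxQ (A B C t : ℝ) : ℝ := A + 2 * (B - A) * t + (A - 2 * B + C) * t ^ 2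

noncomputable def auxφ (ζ η : ℝ → ℝ) (p q A B C t : ℝ) : ℝ :=
  ζ (auxc p q t) * auxQ A B C t - η (auxc p q t)

noncomputable def auxφ1 (ζ η : ℝ → ℝ) (p q A B C t : ℝ) : ℝ :=
  (q - p) * deriv ζ (auxc p q t) * auxQ A B C t
    + ζ (auxc p q t) * (2 * (B - A) + 2 * (A - 2 * B + C) * t)
    - (q - p) * deriv η (auxc p q t)

noncomputable def auxφ2 (ζ η : ℝ → ℝ) (p q A B C t : ℝ) : ℝ :=
  (q - p) ^ 2 * deriv (deriv ζ) (auxc p q t) * auxQ A B C t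
    + 2 * ((q - p) * deriv ζ (auxc p q t)) * (2 * (B - A) + 2 * (A - 2 * B + C) * t)
    + ζ (auxc p q t) * (2 * (A - 2 * B + C))
    - (q - p) ^ 2 * deriv (deriv η) (auxc p q t)

set_option maxHeartbeats 1000000 in
lemma core (ω : ℝ) (ζ η : ℝ → ℝ)
    (hζ : ContDiffOn ℝ 2 ζ (Set.Ioo 0 ω)) (hη : ContDiffOn ℝ 2 η (Set.Ioo 0 ω))
    (hζpos : ∀ t ∈ Set.Ioo (0:ℝ) ω, 0 < ζ t)
    (hηpos : ∀ t ∈ Set.Ioo (0:ℝ) ω, 0 < η t)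
    (h1 : ∀ t ∈ Set.Ioo (0:ℝ) ω, deriv (deriv ζ) t - 2 * (deriv ζ t) ^ 2 / ζ t < 0)
    (h2 : ∀ t ∈ Set.Ioo (0:ℝ) ω,
      (deriv (deriv ζ) t / ζ t - 2 * (deriv ζ t) ^ 2 / (ζ t) ^ 2) * η t
        - deriv (deriv η) t ≥ 0)
    (p q A B C a b : ℝ)
    (hp : p ∈ Set.Ioo 0 ω) (hq : q ∈ Set.Ioo 0 ω)
    (hA : 0 ≤ A) (hC : 0 ≤ C) (hB : B ^ 2 ≤ A * C)
    (hup : ζ p * A - η p < 0) (huq : ζ q * C - η q < 0)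
    (ha : 0 ≤ a) (hb : 0 ≤ b) (hab : a + b = 1) :
    ζ (a * p + b * q) * (a ^ 2 * A + 2 * (a * b) * B + b ^ 2 * C) - η (a * p + b * q)
      ≤ a * (ζ p * A - η p) + b * (ζ q * C - η q) := by
  have hba : a = 1 - b := by linarith
  -- membership of the segment
  have hcmem : ∀ t ∈ Set.Icc (0:ℝ) 1, auxc p q t ∈ Set.Ioo 0 ω := by
    intro t ht
    have h := (convex_Ioo (0:ℝ) ω) hp hq (by linarith [ht.2] : (0:ℝ) ≤ 1 - t) ht.1
      (by ring)
    have hcc : auxc p q t = (1 - t) * p + t * q := by unfold auxc; ring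
    rw [hcc]
    simpa using h
  have hc1 : 0 ≤ A - 2 * B + C := by
    rcases le_or_gt B 0 with h | h
    · linarith
    · nlinarith [sq_nonneg (A - C), hB, hA, hC]
  have hQnn : ∀ t ∈ Set.Icc (0:ℝ) 1, 0 ≤ auxQ A B C t := by
    intro t ht
    rcases eq_or_lt_of_le hA with hA0 | hA0
    · have hB0 : B = 0 := by nlinarith [hB, sq_nonneg B]
      have hQe : auxQ A B C t = C * t ^ 2 := by unfold auxQ; rw [← hA0, hB0]; ring
      rw [hQe]; positivity
    · have hid : A * auxQ A B C t = ((1 - t) * A + t * B) ^ 2 + t ^ 2 * (A * C - B ^ 2) := by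
        unfold auxQ; ring
      nlinarith [sq_nonneg ((1 - t) * A + t * B), sq_nonneg t, hB, hA0]
  -- the key bound inside the region
  have hg := concave_g ω ζ η hζ hη hζpos hηpos h2
  have hQlt : ∀ t ∈ Set.Ioo (0:ℝ) 1, ζ (auxc p q t) * auxQ A B C t < η (auxc p q t) := by
    intro t ht
    have hct := hcmem t (Set.Ioo_subset_Icc_self ht)
    have hzp := hζpos p hp
    have hzq := hζpos q hq
    have hzc := hζpos _ hct
    set sA := √A with hsA0
    set sC := √C with hsC0
    set gp := √(η p / ζ p) with hgp0
    set gq := √(η q / ζ q) with hgq0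
    set gc := √(η (auxc p q t) / ζ (auxc p q t)) with hgc0
    have hAw : A < η p / ζ p := (lt_div_iff₀ hzp).2 (by linarith [mul_comm (ζ p) A])
    have hCw : C < η q / ζ q := (lt_div_iff₀ hzq).2 (by linarith [mul_comm (ζ q) C])
    have hsA : sA < gp := Real.sqrt_lt_sqrt hA hAw
    have hsC : sC < gq := Real.sqrt_lt_sqrt hC hCw
    have hsAnn : 0 ≤ sA := Real.sqrt_nonneg A
    have hsCnn : 0 ≤ sC := Real.sqrt_nonneg C
    have hBs : B ≤ sA * sC := by
      rcases le_or_gt B 0 with h | h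
      · exact h.trans (mul_nonneg hsAnn hsCnn)
      · have hb2 : B ≤ √(A * C) := by
          rw [show B = √(B ^ 2) by rw [Real.sqrt_sq h.le]]
          exact Real.sqrt_le_sqrt hB
        rw [hsA0, hsC0]
        rwa [Real.sqrt_mul hA] at hb2
    have chord := hg.2 hp hq (show 0 ≤ 1 - t by linarith [ht.2]) ht.1.le (by ring)
    simp only [smul_eq_mul] at chord
    have hcc : (1 - t) * p + t * q = auxc p q t := by unfold auxc; ring
    rw [hcc] at chord
    rw [← hgp0, ← hgq0, ← hgc0] at chord
    have hs1nn : 0 ≤ (1 - t) * sA + t * sC := by nlinarith [ht.1, ht.2]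
    have e1 : sA ^ 2 = A := Real.sq_sqrt hA
    have e2 : sC ^ 2 = C := Real.sq_sqrt hC
    have hQle : auxQ A B C t ≤ ((1 - t) * sA + t * sC) ^ 2 := by
      have hprod : 0 ≤ t * (1 - t) * (sA * sC - B) :=
        mul_nonneg (mul_nonneg ht.1.le (by linarith [ht.2])) (by linarith)
      have hexp : ((1 - t) * sA + t * sC) ^ 2
          = (1 - t) ^ 2 * sA ^ 2 + 2 * (t * (1 - t)) * (sA * sC) + t ^ 2 * sC ^ 2 := by
        ring
      rw [e1, e2] at hexp
      unfold auxQ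
      rw [hexp]
      nlinarith [hprod]
    have hs2 : (1 - t) * sA + t * sC < (1 - t) * gp + t * gq := by
      have w1 := mul_lt_mul_of_pos_left hsA (show 0 < 1 - t by linarith [ht.2])
      have w2 := mul_lt_mul_of_pos_left hsC ht.1
      linarith
    have hwc : (0:ℝ) ≤ η (auxc p q t) / ζ (auxc p q t) :=
      (div_pos (hηpos _ hct) hzc).le
    have h3 : ((1 - t) * gp + t * gq) ^ 2 ≤ gc ^ 2 :=
      pow_le_pow_left₀ (by linarith) chord 2
    have h4 : gc ^ 2 = η (auxc p q t) / ζ (auxc p q t) := Real.sq_sqrt hwc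
    have s12 : ((1 - t) * sA + t * sC) ^ 2 < ((1 - t) * gp + t * gq) ^ 2 :=
      pow_lt_pow_left₀ hs2 hs1nn (by norm_num)
    have hQlt' : auxQ A B C t < η (auxc p q t) / ζ (auxc p q t) := by
      linarith [hQle, s12, h3, h4.le, h4.ge]
    rw [mul_comm]
    exact (lt_div_iff₀ hzc).1 hQlt'
  -- derivative machinery
  have hcd : ∀ t : ℝ, HasDerivAt (auxc p q) (q - p) t := by
    intro t
    unfold auxc
    simpa using ((hasDerivAt_id t).mul_const (q - p)).const_add p
  have hQd : ∀ t : ℝ, HasDerivAt (auxQ A B C)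
      (2 * (B - A) + 2 * (A - 2 * B + C) * t) t := by
    intro t
    unfold auxQ
    have ha1 := ((hasDerivAt_pow 2 t).const_mul (A - 2 * B + C))
    have ha2 := ((hasDerivAt_id t).const_mul (2 * (B - A)))
    refine ((ha2.const_add A).add ha1).congr_deriv ?_
    push_cast
    ring
  have hLd : ∀ t : ℝ, HasDerivAt (fun t => 2 * (B - A) + 2 * (A - 2 * B + C) * t)
      (2 * (A - 2 * B + C)) t := by
    intro t
    simpa using ((hasDerivAt_id t).const_mul (2 * (A - 2 * B + C))).const_add (2 * (B - A))
  have hφd : ∀ t : ℝ, auxc p q t ∈ Set.Ioo 0 ω →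
      HasDerivAt (auxφ ζ η p q A B C) (auxφ1 ζ η p q A B C t) t := by
    intro t hct
    have hz := (aux_hd1 hζ _ hct).comp t (hcd t)
    have he := (aux_hd1 hη _ hct).comp t (hcd t)
    have := (hz.mul (hQd t)).sub he
    refine this.congr_deriv ?_
    unfold auxφ1
    simp [Function.comp]
    ring
  have hφ1d : ∀ t : ℝ, auxc p q t ∈ Set.Ioo 0 ω →
      HasDerivAt (auxφ1 ζ η p q A B C) (auxφ2 ζ η p q A B C t) t := by
    intro t hct
    have hz := (aux_hd1 hζ _ hct).comp t (hcd t)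
    have hz1 := (aux_hd2 hζ _ hct).comp t (hcd t)
    have he1 := (aux_hd2 hη _ hct).comp t (hcd t)
    have := (((hz1.const_mul (q - p)).mul (hQd t)).add (hz.mul (hLd t))).sub
      (he1.const_mul (q - p))
    refine this.congr_deriv ?_
    unfold auxφ2
    simp [Function.comp]
    ring
  -- nonnegativity of the second derivative
  have hφ2nn : ∀ t ∈ Set.Ioo (0:ℝ) 1, 0 ≤ auxφ2 ζ η p q A B C t := by
    intro t ht
    have hct := hcmem t (Set.Ioo_subset_Icc_self ht)
    set s := auxc p q t with hsdef
    set z := ζ s with hz0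
    set z1 := deriv ζ s with hz1
    set z2 := deriv (deriv ζ) s with hz2
    set e := η s with he0
    set e2 := deriv (deriv η) s with he2
    set Qt := auxQ A B C t with hQt0
    set δ := q - p with hδ
    have hz : 0 < z := hζpos s hct
    have he : 0 < e := hηpos s hct
    have h1' : z2 * z < 2 * z1 ^ 2 := by
      have := h1 s hct
      rw [sub_neg] at this
      calc z2 * z < 2 * z1 ^ 2 / z * z := by
            exact mul_lt_mul_of_pos_right this hz
        _ = 2 * z1 ^ 2 := by field_simp
    have h2' : e2 * z ^ 2 ≤ (z2 * z - 2 * z1 ^ 2) * e := by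
      have h := h2 s hct
      rw [ge_iff_le, sub_nonneg] at h
      have h' := mul_le_mul_of_nonneg_right h (sq_nonneg z)
      calc e2 * z ^ 2 ≤ ((z2 / z - 2 * z1 ^ 2 / z ^ 2) * e) * z ^ 2 := h'
        _ = (z2 * z - 2 * z1 ^ 2) * e := by field_simp
    have hQltt : z * Qt < e := hQlt t ht
    have hQnnt : 0 ≤ Qt := hQnn t (Set.Ioo_subset_Icc_self ht)
    set P := (B - A) + (A - 2 * B + C) * t with hP
    have hCS : P ^ 2 ≤ Qt * (A - 2 * B + C) := by
      have hid : Qt * (A - 2 * B + C) - P ^ 2 = A * C - B ^ 2 := by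
        rw [hQt0, hP]; unfold auxQ; ring
      nlinarith [hB]
    have hgoal : auxφ2 ζ η p q A B C t
        = δ ^ 2 * z2 * Qt + 4 * (δ * z1) * P + z * (2 * (A - 2 * B + C)) - δ ^ 2 * e2 := by
      unfold auxφ2
      rw [← hsdef, ← hz0, ← hz1, ← hz2, ← he2, ← hQt0, ← hδ, hP]
      ring
    rw [hgoal]
    rcases eq_or_lt_of_le hQnnt with hQ0 | hQ0
    · have hP0 : P = 0 := by nlinarith [hCS, sq_nonneg P]
      have he2neg : e2 ≤ 0 := by nlinarith [h2', mul_pos hz hz, he, h1']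
      rw [hP0, ← hQ0]
      have : 0 ≤ z * (2 * (A - 2 * B + C)) := by positivity
      nlinarith [sq_nonneg δ, this, he2neg]
    · have k1 : 0 ≤ z * ((z2 * z - 2 * z1 ^ 2) * Qt - e2 * z) := by
        have k0 := mul_pos (show (0:ℝ) < 2 * z1 ^ 2 - z2 * z by linarith)
          (show (0:ℝ) < e - z * Qt by linarith)
        nlinarith [h2', k0]
      have k2 : 0 ≤ (z2 * z - 2 * z1 ^ 2) * Qt - e2 * z :=
        nonneg_of_mul_nonneg_right ?kk hz
      case kk => exact k1
      have hT : 0 ≤ δ ^ 2 * Qt * ((z2 * z - 2 * z1 ^ 2) * Qt - e2 * z) :=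
        mul_nonneg (mul_nonneg (sq_nonneg δ) hQnnt) k2
      have hE : 0 ≤ (Qt * z) * (δ ^ 2 * z2 * Qt + 4 * (δ * z1) * P + z * (2 * (A - 2 * B + C))
          - δ ^ 2 * e2) := by
        nlinarith [hT, sq_nonneg (δ * z1 * Qt + z * P),
          mul_nonneg (mul_nonneg (sq_nonneg z) hQnnt) hc1,
          mul_nonneg (sq_nonneg z) (sub_nonneg.2 hCS)]
      exact nonneg_of_mul_nonneg_right hE (mul_pos hQ0 hz)
  -- convexity of φ on [0,1]
  have hccont : Continuous (auxc p q) := by unfold auxc; fun_prop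
  have hQcont : Continuous (auxQ A B C) := by unfold auxQ; fun_prop
  have hφcont : ContinuousOn (auxφ ζ η p q A B C) (Set.Icc 0 1) := by
    unfold auxφ
    exact ((hζ.continuousOn.comp hccont.continuousOn hcmem).mul
      hQcont.continuousOn).sub (hη.continuousOn.comp hccont.continuousOn hcmem)
  have hconv : ConvexOn ℝ (Set.Icc 0 1) (auxφ ζ η p q A B C) := by
    apply convexOn_of_hasDerivWithinAt2_nonneg (convex_Icc 0 1) hφcont
      (f' := auxφ1 ζ η p q A B C) (f'' := auxφ2 ζ η p q A B C)
    · intro t ht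
      rw [interior_Icc] at ht
      exact (hφd t (hcmem t (Set.Ioo_subset_Icc_self ht))).hasDerivWithinAt
    · intro t ht
      rw [interior_Icc] at ht
      exact (hφ1d t (hcmem t (Set.Ioo_subset_Icc_self ht))).hasDerivWithinAt
    · intro t ht
      rw [interior_Icc] at ht
      exact hφ2nn t ht
  have hfin := hconv.2 (Set.left_mem_Icc.2 zero_le_one) (Set.right_mem_Icc.2 zero_le_one)
    ha hb hab
  simp only [smul_eq_mul, mul_zero, mul_one, zero_add] at hfin
  have e0 : auxφ ζ η p q A B C 0 = ζ p * A - η p := by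
    unfold auxφ auxc auxQ
    norm_num
  have e1 : auxφ ζ η p q A B C 1 = ζ q * C - η q := by
    unfold auxφ auxc auxQ
    rw [show p + 1 * (q - p) = q by ring]
    ring_nf
  have eb : auxφ ζ η p q A B C b
      = ζ (a * p + b * q) * (a ^ 2 * A + 2 * (a * b) * B + b ^ 2 * C)
        - η (a * p + b * q) := by
    unfold auxφ auxc auxQ
    rw [show p + b * (q - p) = a * p + b * q by rw [hba]; ring]
    rw [hba]
    ring_nf
  rw [e0, e1, eb] at hfin
  exact hfin



end AuxStmt6

open Set in
/-- Convexity of the ansatz inside the region where it is negative. -/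
theorem stmt6 (n : ℕ) (ω : ℝ) (hω : 0 < ω) (ζ η : ℝ → ℝ)
    (hζ : ContDiffOn ℝ 2 ζ (Set.Ioo 0 ω)) (hη : ContDiffOn ℝ 2 η (Set.Ioo 0 ω))
    (hζpos : ∀ t ∈ Set.Ioo (0:ℝ) ω, 0 < ζ t)
    (hηpos : ∀ t ∈ Set.Ioo (0:ℝ) ω, 0 < η t)
    (h1 : ∀ t ∈ Set.Ioo (0:ℝ) ω, deriv (deriv ζ) t - 2 * (deriv ζ t) ^ 2 / ζ t < 0)
    (h2 : ∀ t ∈ Set.Ioo (0:ℝ) ω,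
      (deriv (deriv ζ) t / ζ t - 2 * (deriv ζ t) ^ 2 / (ζ t) ^ 2) * η t
        - deriv (deriv η) t ≥ 0)
    (u : EuclideanSpace ℝ (Fin (n + 1)) → ℝ)
    (hu : ∀ x, u x = ζ (x 0) * (∑ i : Fin n, (x i.succ) ^ 2) - η (x 0)) :
    ConvexOn ℝ {x : EuclideanSpace ℝ (Fin (n + 1)) | x 0 ∈ Set.Ioo (0:ℝ) ω ∧ u x < 0} u := by
  have key : ∀ x y : EuclideanSpace ℝ (Fin (n + 1)), x 0 ∈ Set.Ioo (0:ℝ) ω → u x < 0 →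
      y 0 ∈ Set.Ioo (0:ℝ) ω → u y < 0 → ∀ a b : ℝ, 0 ≤ a → 0 ≤ b → a + b = 1 →
      (a • x + b • y) 0 = a * x 0 + b * y 0 ∧ u (a • x + b • y) ≤ a * u x + b * u y := by
    intro x y hx hux hy huy a b ha hb hab
    have hcoord : ∀ i, (a • x + b • y) i = a * x i + b * y i := by
      intro i
      simp [PiLp.add_apply, PiLp.smul_apply, smul_eq_mul]
    refine ⟨hcoord 0, ?_⟩
    have hsum : ∑ i : Fin n, ((a • x + b • y) i.succ) ^ 2
        = a ^ 2 * (∑ i : Fin n, (x i.succ) ^ 2)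
          + 2 * (a * b) * (∑ i : Fin n, x i.succ * y i.succ)
          + b ^ 2 * (∑ i : Fin n, (y i.succ) ^ 2) := by
      have hterm : ∀ i ∈ Finset.univ, ((a • x + b • y) (i : Fin n).succ) ^ 2
          = a ^ 2 * (x i.succ) ^ 2 + 2 * (a * b) * (x i.succ * y i.succ)
            + b ^ 2 * (y i.succ) ^ 2 := by
        intro i _
        rw [hcoord]
        ring
      rw [Finset.sum_congr rfl hterm, Finset.sum_add_distrib, Finset.sum_add_distrib,
        ← Finset.mul_sum, ← Finset.mul_sum, ← Finset.mul_sum]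
    have hA : 0 ≤ ∑ i : Fin n, (x i.succ) ^ 2 :=
      Finset.sum_nonneg fun i _ => sq_nonneg _
    have hC : 0 ≤ ∑ i : Fin n, (y i.succ) ^ 2 :=
      Finset.sum_nonneg fun i _ => sq_nonneg _
    have hB : (∑ i : Fin n, x i.succ * y i.succ) ^ 2
        ≤ (∑ i : Fin n, (x i.succ) ^ 2) * (∑ i : Fin n, (y i.succ) ^ 2) :=
      Finset.sum_mul_sq_le_sq_mul_sq Finset.univ _ _
    rw [hu x] at hux
    rw [hu y] at huy
    rw [hu _, hu x, hu y, hcoord 0, hsum]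
    exact core ω ζ η hζ hη hζpos hηpos h1 h2 (x 0) (y 0) _ _ _ a b hx hy
      hA hC hB hux huy ha hb hab
  constructor
  · intro x hx y hy a b ha hb hab
    obtain ⟨hc0, hle⟩ := key x y hx.1 hx.2 hy.1 hy.2 a b ha hb hab
    refine ⟨?_, ?_⟩
    · rw [hc0]
      have := (convex_Ioo (0:ℝ) ω) hx.1 hy.1 ha hb hab
      simpa using this
    · have hneg : a * u x + b * u y < 0 := by
        rcases eq_or_lt_of_le ha with h | h
        · have hb1 : b = 1 := by linarith
          rw [← h, hb1]
          simpa using hy.2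
        · have g1 : a * u x < 0 := mul_neg_of_pos_of_neg h hx.2
          have g2 : b * u y ≤ 0 := mul_nonpos_of_nonneg_of_nonpos hb hy.2.le
          linarith
      exact lt_of_le_of_lt hle hneg
  · intro x hx y hy a b ha hb hab
    obtain ⟨_, hle⟩ := key x y hx.1 hx.2 hy.1 hy.2 a b ha hb hab
    simpa [smul_eq_mul] using hle
end

section
/- For θ ∈ (0, 1/2) and constants C₁, C₂ > 0, C₃, C₄ ≥ 0, the function u(y,t) = C₁|y|² + C₂ t^{2 - 1/θ} + C₃ t + C₄ on ℝ^n × (0,∞) is a strictly convex solution of the affine maximal type equation u^{ij} D_{ij} w = 0 with w = (det D²u)^{-θ}, and its graph is Euclidean complete but not an elliptic paraboloid. -/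
open MeasureTheory Metric Real

namespace Stmt13Aux

open Filter

noncomputable def P (n : ℕ) (i : Fin (n+1)) : EuclideanSpace ℝ (Fin (n+1)) →L[ℝ] ℝ :=
  EuclideanSpace.proj i

lemma hasFDerivAt_u {n : ℕ} (C₁ C₂ C₃ C₄ α : ℝ) (x : EuclideanSpace ℝ (Fin (n+1)))
    (hx : x (Fin.last n) ≠ 0) :
    HasFDerivAt (fun x : EuclideanSpace ℝ (Fin (n+1)) =>
      C₁ * (∑ i : Fin n, (x i.castSucc) ^ 2) + C₂ * (x (Fin.last n)) ^ α
        + C₃ * x (Fin.last n) + C₄)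
      (C₁ • (∑ i : Fin n, (2 * x i.castSucc) • P n i.castSucc)
        + (C₂ * (α * (x (Fin.last n)) ^ (α - 1))) • P n (Fin.last n)
        + C₃ • P n (Fin.last n)) x := by
  have h1 : ∀ i : Fin n, HasFDerivAt (fun y : EuclideanSpace ℝ (Fin (n+1)) =>
      (y i.castSucc) ^ 2) ((2 * x i.castSucc) • P n i.castSucc) x := by
    intro i
    have := (hasDerivAt_pow 2 (x i.castSucc)).comp_hasFDerivAt x
      (P n i.castSucc).hasFDerivAt
    simpa [P, Function.comp_def] using this
  have h2 : HasFDerivAt (fun y : EuclideanSpace ℝ (Fin (n+1)) =>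
      (y (Fin.last n)) ^ α) ((α * (x (Fin.last n)) ^ (α - 1)) • P n (Fin.last n)) x := by
    have := (Real.hasDerivAt_rpow_const (p := α) (Or.inl hx)).comp_hasFDerivAt x
      (P n (Fin.last n)).hasFDerivAt
    simpa [P, Function.comp_def] using this
  have h3 : HasFDerivAt (fun y : EuclideanSpace ℝ (Fin (n+1)) =>
      y (Fin.last n)) (P n (Fin.last n)) x := by
    simpa [P] using (P n (Fin.last n)).hasFDerivAt (x := x)
  have hsum : HasFDerivAt (fun y : EuclideanSpace ℝ (Fin (n+1)) =>
      ∑ i : Fin n, (y i.castSucc) ^ 2) (∑ i : Fin n, (2 * x i.castSucc) • P n i.castSucc) x :=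
    HasFDerivAt.fun_sum (fun i _ => h1 i)
  exact (((hsum.const_mul C₁).add (h2.const_mul C₂)).add (h3.const_mul C₃)).add_const C₄ |>.congr_fderiv (by module)

lemma proj_single {n : ℕ} (i j : Fin (n+1)) :
    P n i (EuclideanSpace.single j (1:ℝ)) = if i = j then 1 else 0 := by
  simp [P, EuclideanSpace.single_apply]

lemma grad_u {n : ℕ} (C₁ C₂ C₃ C₄ α : ℝ) (x : EuclideanSpace ℝ (Fin (n+1)))
    (hx : x (Fin.last n) ≠ 0) (j : Fin (n+1)) :
    fderiv ℝ (fun x : EuclideanSpace ℝ (Fin (n+1)) =>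
      C₁ * (∑ i : Fin n, (x i.castSucc) ^ 2) + C₂ * (x (Fin.last n)) ^ α
        + C₃ * x (Fin.last n) + C₄) x (EuclideanSpace.single j 1)
    = (if j = Fin.last n then C₂ * (α * (x (Fin.last n)) ^ (α - 1)) + C₃
        else 2 * C₁ * x j) := by
  rw [(hasFDerivAt_u C₁ C₂ C₃ C₄ α x hx).fderiv]
  simp only [ContinuousLinearMap.add_apply, ContinuousLinearMap.smul_apply,
    ContinuousLinearMap.coe_sum', Finset.sum_apply, proj_single, smul_eq_mul,
    mul_ite, mul_one, mul_zero]
  by_cases hj : j = Fin.last n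
  · subst hj
    have : ∀ i : Fin n, ¬ (i.castSucc = Fin.last n) := fun i => (Fin.castSucc_lt_last i).ne
    simp [this]
  · rw [if_neg hj, if_neg (fun h => hj h.symm), if_neg (fun h => hj h.symm)]
    rw [add_zero, add_zero]
    obtain ⟨k, rfl⟩ : ∃ k : Fin n, j = k.castSucc := ⟨j.castPred hj, (Fin.castSucc_castPred j hj).symm⟩
    have : ∀ i : Fin n, (i.castSucc = k.castSucc) ↔ i = k := fun i => Fin.castSucc_inj
    simp only [this]
    rw [Finset.sum_ite_eq' Finset.univ k (fun i => 2 * x i.castSucc)]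
    simp
    ring

lemma isOpen_D {n : ℕ} : IsOpen {y : EuclideanSpace ℝ (Fin (n+1)) | 0 < y (Fin.last n)} := by
  have : Continuous (fun y : EuclideanSpace ℝ (Fin (n+1)) => y (Fin.last n)) := by
    simpa [P] using (P n (Fin.last n)).continuous
  exact isOpen_lt continuous_const this

lemma hess_u {n : ℕ} (C₁ C₂ C₃ C₄ α : ℝ) (x : EuclideanSpace ℝ (Fin (n+1)))
    (hx : 0 < x (Fin.last n)) :
    Hess (fun x : EuclideanSpace ℝ (Fin (n+1)) =>
      C₁ * (∑ i : Fin n, (x i.castSucc) ^ 2) + C₂ * (x (Fin.last n)) ^ α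
        + C₃ * x (Fin.last n) + C₄) x
    = Matrix.diagonal (fun i => if i = Fin.last n
        then C₂ * (α * ((α - 1) * (x (Fin.last n)) ^ (α - 2))) else 2 * C₁) := by
  have hmem : {y : EuclideanSpace ℝ (Fin (n+1)) | 0 < y (Fin.last n)} ∈ nhds x :=
    isOpen_D.mem_nhds hx
  funext i j
  have hEq : (fun y : EuclideanSpace ℝ (Fin (n+1)) =>
      fderiv ℝ (fun x : EuclideanSpace ℝ (Fin (n+1)) =>
        C₁ * (∑ i : Fin n, (x i.castSucc) ^ 2) + C₂ * (x (Fin.last n)) ^ α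
          + C₃ * x (Fin.last n) + C₄) y (EuclideanSpace.single i 1))
      =ᶠ[nhds x] (fun y => if i = Fin.last n
        then C₂ * (α * (y (Fin.last n)) ^ (α - 1)) + C₃ else 2 * C₁ * y i) :=
    Filter.eventually_of_mem hmem (fun y hy => grad_u C₁ C₂ C₃ C₄ α y (ne_of_gt hy) i)
  show fderiv ℝ _ x (EuclideanSpace.single j 1) = _
  rw [hEq.fderiv_eq]
  by_cases hi : i = Fin.last n
  · simp only [if_pos hi]
    have h2 : HasFDerivAt (fun y : EuclideanSpace ℝ (Fin (n+1)) =>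
        (y (Fin.last n)) ^ (α-1)) (((α-1) * (x (Fin.last n)) ^ (α - 2)) • P n (Fin.last n)) x := by
      have := (Real.hasDerivAt_rpow_const (p := α - 1) (Or.inl hx.ne')).comp_hasFDerivAt x
        (P n (Fin.last n)).hasFDerivAt
      have h' : α - 1 - 1 = α - 2 := by ring
      simpa [P, Function.comp_def, h'] using this
    have h3 : HasFDerivAt (fun y : EuclideanSpace ℝ (Fin (n+1)) =>
        C₂ * (α * (y (Fin.last n)) ^ (α - 1)) + C₃)
        ((C₂ * (α * ((α - 1) * (x (Fin.last n)) ^ (α - 2)))) • P n (Fin.last n)) x := by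
      have := ((h2.const_mul α).const_mul C₂).add_const C₃
      exact this.congr_fderiv (by module)
    rw [h3.fderiv]
    subst hi
    simp only [ContinuousLinearMap.smul_apply, proj_single, smul_eq_mul, Matrix.diagonal_apply]
    by_cases hj : Fin.last n = j
    · simp [hj]
    · rw [if_neg hj, if_neg (fun h => hj h)]
      ring
  · simp only [if_neg hi]
    have h4 : HasFDerivAt (fun y : EuclideanSpace ℝ (Fin (n+1)) =>
        2 * C₁ * y i) ((2 * C₁) • P n i) x := by
      simpa [P] using ((P n i).hasFDerivAt (x := x)).const_mul (2 * C₁)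
    rw [h4.fderiv]
    simp only [ContinuousLinearMap.smul_apply, proj_single, smul_eq_mul, Matrix.diagonal_apply]
    by_cases hj : i = j
    · simp [hj, if_neg (hj ▸ hi)]
    · simp [hj, if_neg (fun h => hj h)]

lemma det_hess_u {n : ℕ} (C₁ C₂ C₃ C₄ α : ℝ) (x : EuclideanSpace ℝ (Fin (n+1)))
    (hx : 0 < x (Fin.last n)) :
    (Hess (fun x : EuclideanSpace ℝ (Fin (n+1)) =>
      C₁ * (∑ i : Fin n, (x i.castSucc) ^ 2) + C₂ * (x (Fin.last n)) ^ α
        + C₃ * x (Fin.last n) + C₄) x).det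
    = ((2*C₁)^n * (C₂ * (α * (α-1)))) * (x (Fin.last n)) ^ (α - 2) := by
  rw [hess_u C₁ C₂ C₃ C₄ α x hx, Matrix.det_diagonal, Fin.prod_univ_castSucc]
  have : ∀ i : Fin n, ¬ (i.castSucc = Fin.last n) := fun i => (Fin.castSucc_lt_last i).ne
  simp [this]
  ring

lemma w_eq {n : ℕ} (θ C₁ C₂ C₃ C₄ : ℝ) (hθ : θ ∈ Set.Ioo (0:ℝ) (1/2))
    (hC₁ : 0 < C₁) (hC₂ : 0 < C₂) (x : EuclideanSpace ℝ (Fin (n+1)))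
    (hx : 0 < x (Fin.last n)) :
    ((Hess (fun x : EuclideanSpace ℝ (Fin (n+1)) =>
      C₁ * (∑ i : Fin n, (x i.castSucc) ^ 2) + C₂ * (x (Fin.last n)) ^ (2 - 1/θ)
        + C₃ * x (Fin.last n) + C₄) x).det) ^ (-θ)
    = ((2*C₁)^n * (C₂ * ((2 - 1/θ) * ((2 - 1/θ)-1)))) ^ (-θ) * x (Fin.last n) := by
  set α : ℝ := 2 - 1/θ with hαdef
  have hθ0 : 0 < θ := hθ.1
  have h2θ : 2 < 1/θ := by
    rw [lt_div_iff₀ hθ0]; linarith [hθ.2]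
  have hα : α < 0 := by simp only [hαdef]; linarith
  have hK : 0 < (2*C₁)^n * (C₂ * (α * (α-1))) := by
    have h1 : 0 < α * (α - 1) := mul_pos_of_neg_of_neg hα (by linarith)
    positivity
  rw [det_hess_u C₁ C₂ C₃ C₄ α x hx]
  rw [Real.mul_rpow hK.le (Real.rpow_nonneg hx.le _), ← Real.rpow_mul hx.le,
    show (α - 2) * (-θ) = 1 by rw [hαdef, show (2 - 1/θ - 2) * (-θ) = 1/θ*θ by ring]; exact one_div_mul_cancel hθ0.ne', Real.rpow_one]

lemma hess_w {n : ℕ} (θ C₁ C₂ C₃ C₄ : ℝ) (hθ : θ ∈ Set.Ioo (0:ℝ) (1/2))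
    (hC₁ : 0 < C₁) (hC₂ : 0 < C₂) (x : EuclideanSpace ℝ (Fin (n+1)))
    (hx : 0 < x (Fin.last n)) :
    Hess (fun z => ((Hess (fun x : EuclideanSpace ℝ (Fin (n+1)) =>
      C₁ * (∑ i : Fin n, (x i.castSucc) ^ 2) + C₂ * (x (Fin.last n)) ^ (2 - 1/θ)
        + C₃ * x (Fin.last n) + C₄) z).det) ^ (-θ)) x = 0 := by
  set K : ℝ := ((2*C₁)^n * (C₂ * ((2 - 1/θ) * ((2 - 1/θ)-1)))) ^ (-θ) with hK
  set u : EuclideanSpace ℝ (Fin (n+1)) → ℝ := fun x =>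
    C₁ * (∑ i : Fin n, (x i.castSucc) ^ 2) + C₂ * (x (Fin.last n)) ^ (2 - 1/θ)
      + C₃ * x (Fin.last n) + C₄ with hu
  have hlin : ∀ y : EuclideanSpace ℝ (Fin (n+1)), HasFDerivAt
      (fun z : EuclideanSpace ℝ (Fin (n+1)) => K * z (Fin.last n)) (K • P n (Fin.last n)) y := by
    intro y
    simpa [P] using ((P n (Fin.last n)).hasFDerivAt (x := y)).const_mul K
  have hgrad : ∀ y : EuclideanSpace ℝ (Fin (n+1)), 0 < y (Fin.last n) → ∀ i,
      fderiv ℝ (fun z => ((Hess u z).det) ^ (-θ)) y (EuclideanSpace.single i 1)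
      = K * (if Fin.last n = i then 1 else 0) := by
    intro y hy i
    have hEq : (fun z => ((Hess u z).det) ^ (-θ))
        =ᶠ[nhds y] (fun z => K * z (Fin.last n)) :=
      Filter.eventually_of_mem (isOpen_D.mem_nhds hy)
        (fun z hz => w_eq θ C₁ C₂ C₃ C₄ hθ hC₁ hC₂ z hz)
    rw [hEq.fderiv_eq, (hlin y).fderiv]
    simp [proj_single]
  funext i j
  show fderiv ℝ _ x (EuclideanSpace.single j 1) = _
  have hEq2 : (fun y => fderiv ℝ (fun z => ((Hess u z).det) ^ (-θ)) y
        (EuclideanSpace.single i 1))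
      =ᶠ[nhds x] (fun _ => K * (if Fin.last n = i then 1 else 0)) :=
    Filter.eventually_of_mem (isOpen_D.mem_nhds hx) (fun y hy => hgrad y hy i)
  rw [hEq2.fderiv_eq, fderiv_fun_const]
  simp

lemma cont_coord {n : ℕ} (j : Fin (n+1)) :
    Continuous (fun y : EuclideanSpace ℝ (Fin (n+1)) => y j) := by
  simpa [P] using (P n j).continuous

lemma tendsto_rpow_blowup (C₂ α : ℝ) (hC₂ : 0 < C₂) (hα : α < 0) :
    Filter.Tendsto (fun t : ℝ => C₂ * t ^ α) (nhdsWithin 0 (Set.Ioi 0)) Filter.atTop := by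
  have h1 : Filter.Tendsto (fun t : ℝ => C₂ * (t⁻¹) ^ (-α)) (nhdsWithin 0 (Set.Ioi 0))
      Filter.atTop :=
    ((tendsto_rpow_atTop (neg_pos.mpr hα)).const_mul_atTop hC₂).comp tendsto_inv_nhdsGT_zero
  apply h1.congr'
  filter_upwards [self_mem_nhdsWithin] with t ht
  rw [Real.inv_rpow (le_of_lt ht), Real.rpow_neg (le_of_lt ht), inv_inv]

end Stmt13Aux

/-- Euclidean complete non-quadratic affine maximal type hypersurfaces for θ ∈ (0,1/2). -/
theorem stmt13 (n : ℕ) (hn : 1 ≤ n) (θ : ℝ) (hθ : θ ∈ Set.Ioo (0:ℝ) (1/2))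
    (C₁ C₂ C₃ C₄ : ℝ) (hC₁ : 0 < C₁) (hC₂ : 0 < C₂) (hC₃ : 0 ≤ C₃) (hC₄ : 0 ≤ C₄)
    (u : EuclideanSpace ℝ (Fin (n + 1)) → ℝ)
    (hu : ∀ x, u x = C₁ * (∑ i : Fin n, (x i.castSucc) ^ 2)
        + C₂ * (x (Fin.last n)) ^ (2 - 1/θ) + C₃ * x (Fin.last n) + C₄)
    (D : Set (EuclideanSpace ℝ (Fin (n + 1))))
    (hD : D = {x | 0 < x (Fin.last n)}) :
    (∀ x ∈ D, (Hess u x).PosDef) ∧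
    (∀ x ∈ D, ∑ i, ∑ j,
        (Hess u x)⁻¹ i j * Hess (fun z => ((Hess u z).det) ^ (-θ)) x i j = 0) ∧
    IsComplete {p : EuclideanSpace ℝ (Fin (n + 1)) × ℝ | p.1 ∈ D ∧ p.2 = u p.1} ∧
    ¬ ∃ (A : Matrix (Fin (n + 1)) (Fin (n + 1)) ℝ) (b : Fin (n + 1) → ℝ) (c : ℝ),
        ∀ x ∈ D, u x = (∑ i, ∑ j, A i j * x i * x j) + (∑ i, b i * x i) + c := by
  have hu' : u = fun x => C₁ * (∑ i : Fin n, (x i.castSucc) ^ 2)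
      + C₂ * (x (Fin.last n)) ^ (2 - 1/θ) + C₃ * x (Fin.last n) + C₄ := funext hu
  subst hu'
  subst hD
  have hθ0 : 0 < θ := hθ.1
  have h2θ : 2 < 1/θ := by rw [lt_div_iff₀ hθ0]; linarith [hθ.2]
  have hα : (2 - 1/θ : ℝ) < 0 := by linarith
  refine ⟨?_, ?_, ?_, ?_⟩
  · -- positive definiteness
    intro x hx
    have hx' : 0 < x (Fin.last n) := hx
    rw [Stmt13Aux.hess_u C₁ C₂ C₃ C₄ (2 - 1/θ) x hx', Matrix.posDef_diagonal_iff]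
    intro i
    by_cases hi : i = Fin.last n
    · rw [if_pos hi]
      have h5 : 0 < (2 - 1/θ) * ((2 - 1/θ) - 1) := mul_pos_of_neg_of_neg hα (by linarith)
      have h6 : 0 < (x (Fin.last n)) ^ ((2 - 1/θ) - 2) := Real.rpow_pos_of_pos hx' _
      nlinarith [mul_pos (mul_pos hC₂ h5) h6]
    · rw [if_neg hi]; linarith
  · -- the equation
    intro x hx
    have hx' : 0 < x (Fin.last n) := hx
    rw [Stmt13Aux.hess_w θ C₁ C₂ C₃ C₄ hθ hC₁ hC₂ x hx']
    simp
  · -- completeness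
    apply IsClosed.isComplete
    apply IsSeqClosed.isClosed
    intro q p hq hlim
    have hlim1 : Filter.Tendsto (fun k => (q k).1) Filter.atTop (nhds p.1) :=
      (continuous_fst.tendsto p).comp hlim
    have hlim2 : Filter.Tendsto (fun k => (q k).2) Filter.atTop (nhds p.2) :=
      (continuous_snd.tendsto p).comp hlim
    have hlimt : Filter.Tendsto (fun k => (q k).1 (Fin.last n)) Filter.atTop
        (nhds (p.1 (Fin.last n))) :=
      ((Stmt13Aux.cont_coord (Fin.last n)).tendsto p.1).comp hlim1
    have htpos : ∀ k, 0 < (q k).1 (Fin.last n) := fun k => (hq k).1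
    have hqv : ∀ k, (q k).2 = C₁ * (∑ i : Fin n, ((q k).1 i.castSucc) ^ 2)
        + C₂ * ((q k).1 (Fin.last n)) ^ (2 - 1/θ) + C₃ * (q k).1 (Fin.last n) + C₄ :=
      fun k => (hq k).2
    have hT : 0 ≤ p.1 (Fin.last n) := ge_of_tendsto' hlimt (fun k => (htpos k).le)
    rcases hT.lt_or_eq with h0 | h0
    · -- positive limit: point lies in the graph
      refine ⟨h0, ?_⟩
      have hcont : ContinuousAt (fun y : EuclideanSpace ℝ (Fin (n+1)) =>
          C₁ * (∑ i : Fin n, (y i.castSucc) ^ 2) + C₂ * (y (Fin.last n)) ^ (2 - 1/θ)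
            + C₃ * y (Fin.last n) + C₄) p.1 := by
        refine ContinuousAt.add (ContinuousAt.add (ContinuousAt.add ?_ ?_) ?_) continuousAt_const
        · exact (continuous_const.mul (continuous_finset_sum _
            (fun i _ => (Stmt13Aux.cont_coord i.castSucc).pow 2))).continuousAt
        · have hr : ContinuousAt (fun s : ℝ => s ^ (2 - 1/θ)) (p.1 (Fin.last n)) :=
            Real.continuousAt_rpow_const _ _ (Or.inl h0.ne')
          exact continuousAt_const.mul
            (ContinuousAt.comp (f := fun y : EuclideanSpace ℝ (Fin (n+1)) => y (Fin.last n))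
              (x := p.1) hr ((Stmt13Aux.cont_coord (Fin.last n)).continuousAt))
        · exact (continuous_const.mul (Stmt13Aux.cont_coord (Fin.last n))).continuousAt
      exact tendsto_nhds_unique (hlim2.congr hqv) (hcont.tendsto.comp hlim1)
    · -- limit on the boundary: impossible
      exfalso
      have h1 : Filter.Tendsto (fun k => (q k).1 (Fin.last n)) Filter.atTop
          (nhdsWithin 0 (Set.Ioi 0)) :=
        tendsto_nhdsWithin_of_tendsto_nhds_of_eventually_within _ (h0 ▸ hlimt)
          (Filter.Eventually.of_forall htpos)
      have h2 : Filter.Tendsto (fun k => C₂ * ((q k).1 (Fin.last n)) ^ (2 - 1/θ))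
          Filter.atTop Filter.atTop :=
        (Stmt13Aux.tendsto_rpow_blowup C₂ _ hC₂ hα).comp h1
      have h3 : Filter.Tendsto (fun k => C₁ * (∑ i : Fin n, ((q k).1 i.castSucc) ^ 2)
          + C₃ * (q k).1 (Fin.last n) + C₄) Filter.atTop
          (nhds (C₁ * (∑ i : Fin n, (p.1 i.castSucc) ^ 2) + C₃ * p.1 (Fin.last n) + C₄)) := by
        refine Filter.Tendsto.add (Filter.Tendsto.add ?_ ?_) tendsto_const_nhds
        · have hsum : Continuous (fun y : EuclideanSpace ℝ (Fin (n+1)) =>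
              ∑ i : Fin n, (y i.castSucc) ^ 2) :=
            continuous_finset_sum _ (fun i _ => (Stmt13Aux.cont_coord i.castSucc).pow 2)
          exact tendsto_const_nhds.mul ((hsum.tendsto p.1).comp hlim1)
        · exact tendsto_const_nhds.mul hlimt
      have h4 := h3.add_atTop h2
      have h5 : Filter.Tendsto (fun k => (q k).2) Filter.atTop Filter.atTop := by
        apply h4.congr
        intro k
        rw [hqv k]
        ring
      exact not_tendsto_atTop_of_tendsto_nhds hlim2 h5
  · -- not a paraboloid
    rintro ⟨A, b, c, h⟩
    have hmem : ∀ t : ℝ, 0 < t → (EuclideanSpace.single (Fin.last n) t) ∈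
        {x : EuclideanSpace ℝ (Fin (n+1)) | 0 < x (Fin.last n)} := by
      intro t ht
      show 0 < EuclideanSpace.single (Fin.last n) t (Fin.last n)
      simpa [EuclideanSpace.single_apply] using ht
    have hne : ∀ i : Fin n, i.castSucc ≠ Fin.last n := fun i => (Fin.castSucc_lt_last i).ne
    have heq : ∀ t : ℝ, 0 < t →
        (C₃ * t + C₄) + C₂ * t ^ (2 - 1/θ)
        = A (Fin.last n) (Fin.last n) * t * t + b (Fin.last n) * t + c := by
      intro t ht
      have hc := h (EuclideanSpace.single (Fin.last n) t) (hmem t ht)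
      simp only [EuclideanSpace.single_apply] at hc
      simp [hne, mul_ite, ite_mul, mul_zero, zero_mul, Finset.sum_ite_eq',
        Finset.mem_univ] at hc
      rw [← one_div] at hc
      linarith [hc]
    have hR : Filter.Tendsto (fun t : ℝ => A (Fin.last n) (Fin.last n) * t * t
        + b (Fin.last n) * t + c) (nhdsWithin 0 (Set.Ioi 0)) (nhds c) := by
      have hco : Continuous fun t : ℝ => A (Fin.last n) (Fin.last n) * t * t
          + b (Fin.last n) * t + c := by fun_prop
      have h0 := hco.tendsto 0
      simp only [mul_zero, zero_add, add_zero] at h0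
      exact h0.mono_left nhdsWithin_le_nhds
    have hL : Filter.Tendsto (fun t : ℝ => (C₃ * t + C₄) + C₂ * t ^ (2 - 1/θ))
        (nhdsWithin 0 (Set.Ioi 0)) Filter.atTop := by
      apply Filter.Tendsto.add_atTop (C := C₃ * 0 + C₄) _
        (Stmt13Aux.tendsto_rpow_blowup C₂ _ hC₂ hα)
      have hco : Continuous fun t : ℝ => C₃ * t + C₄ := by fun_prop
      exact (hco.tendsto 0).mono_left nhdsWithin_le_nhds
    have hL' : Filter.Tendsto (fun t : ℝ => A (Fin.last n) (Fin.last n) * t * t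
        + b (Fin.last n) * t + c) (nhdsWithin 0 (Set.Ioi 0)) Filter.atTop :=
      hL.congr' (Filter.eventually_of_mem self_mem_nhdsWithin (fun t ht => heq t ht))
    exact not_tendsto_atTop_of_tendsto_nhds hR hL'
end

section
/- For N = n+1 ≥ 2 and θ = (N-1)/N, the function u(y,t) = e^{|y|² + t} on ℝ^n × ℝ is an entire solution of the affine maximal type equation u^{ij}D_{ij}w = 0 with w = (det D²u)^{-θ}, and it is not a quadratic polynomial. -/
open MeasureTheory Metric Real

namespace Stmt18

noncomputable section

def q (n : ℕ) (x : EuclideanSpace ℝ (Fin (n+1))) : ℝ :=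
  (∑ i : Fin n, x i.castSucc * x i.castSucc) + x (Fin.last n)

def q' (n : ℕ) (x : EuclideanSpace ℝ (Fin (n+1))) :
    EuclideanSpace ℝ (Fin (n+1)) →L[ℝ] ℝ :=
  (∑ i : Fin n, (x i.castSucc • EuclideanSpace.proj (𝕜 := ℝ) i.castSucc +
      x i.castSucc • EuclideanSpace.proj (𝕜 := ℝ) i.castSucc)) +
    EuclideanSpace.proj (Fin.last n)

def G (n : ℕ) (x : EuclideanSpace ℝ (Fin (n+1))) (i : Fin (n+1)) : ℝ :=
  if i = Fin.last n then 1 else 2 * x i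

def d (n : ℕ) (i j : Fin (n+1)) : ℝ := if i = j ∧ i ≠ Fin.last n then 2 else 0

lemma hasFDerivAt_coord {m : ℕ} (i : Fin m) (x : EuclideanSpace ℝ (Fin m)) :
    HasFDerivAt (fun y : EuclideanSpace ℝ (Fin m) => y i)
      (EuclideanSpace.proj (𝕜 := ℝ) i) x :=
  (EuclideanSpace.proj (𝕜 := ℝ) i).hasFDerivAt

lemma hasFDerivAt_q (n : ℕ) (x : EuclideanSpace ℝ (Fin (n+1))) :
    HasFDerivAt (q n) (q' n x) x := by
  exact HasFDerivAt.add
    (HasFDerivAt.fun_sum fun i _ =>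
      ((hasFDerivAt_coord i.castSucc x).mul (hasFDerivAt_coord i.castSucc x)))
    (hasFDerivAt_coord (Fin.last n) x)

lemma q'_single (n : ℕ) (x : EuclideanSpace ℝ (Fin (n+1))) (j : Fin (n+1)) :
    q' n x (EuclideanSpace.single j 1) = G n x j := by
  induction j using Fin.lastCases with
  | last =>
      simp [q', G, EuclideanSpace.single_apply, (Fin.castSucc_lt_last _).ne]
  | cast k =>
      simp [q', G, EuclideanSpace.single_apply, (Fin.castSucc_lt_last _).ne',
        Fin.castSucc_inj, (Fin.castSucc_lt_last k).ne]
      rw [Finset.sum_add_distrib]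
      simp
      ring

lemma hasFDerivAt_aexp (n : ℕ) (a b : ℝ) (y : EuclideanSpace ℝ (Fin (n+1))) :
    HasFDerivAt (fun z => a * Real.exp (b * q n z))
      ((a * (Real.exp (b * q n y) * b)) • q' n y) y := by
  have h := (((hasFDerivAt_q n y).const_mul b).exp).const_mul a
  simpa [smul_smul] using h

lemma fderiv_aexp_single (n : ℕ) (a b : ℝ) (y : EuclideanSpace ℝ (Fin (n+1)))
    (i : Fin (n+1)) :
    fderiv ℝ (fun z => a * Real.exp (b * q n z)) y (EuclideanSpace.single i 1)
      = a * b * G n y i * Real.exp (b * q n y) := by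
  rw [(hasFDerivAt_aexp n a b y).fderiv]
  simp [q'_single]
  ring

lemma hess_aexp (n : ℕ) (a b : ℝ) (x : EuclideanSpace ℝ (Fin (n+1))) (i j : Fin (n+1)) :
    Hess (fun z => a * Real.exp (b * q n z)) x i j =
      a * Real.exp (b * q n x) * (b^2 * G n x i * G n x j + b * d n i j) := by
  have hfun : (fun y => fderiv ℝ (fun z => a * Real.exp (b * q n z)) y
        (EuclideanSpace.single i 1))
      = fun y => a * b * G n y i * Real.exp (b * q n y) :=
    funext fun y => fderiv_aexp_single n a b y i
  show fderiv ℝ _ x _ = _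
  rw [hfun]
  by_cases hi : i = Fin.last n
  · subst hi
    have h2 : (fun y => a * b * G n y (Fin.last n) * Real.exp (b * q n y))
        = fun y => (a * b) * Real.exp (b * q n y) := by
      funext y; simp [G]
    rw [h2, (((hasFDerivAt_q n x).const_mul b).exp.const_mul (a*b)).fderiv]
    simp [q'_single, d, G]
    ring
  · have h2 : (fun y => a * b * G n y i * Real.exp (b * q n y))
        = fun y => (a * b * (2 * y i)) * Real.exp (b * q n y) := by
      funext y; simp [G, hi]
    rw [h2]
    have hc : HasFDerivAt (fun y : EuclideanSpace ℝ (Fin (n+1)) => a * b * (2 * y i))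
        ((a*b) • ((2:ℝ) • (EuclideanSpace.proj (𝕜 := ℝ) i))) x :=
      ((hasFDerivAt_coord i x).const_mul 2).const_mul (a*b)
    have he : HasFDerivAt (fun y => Real.exp (b * q n y))
        (Real.exp (b * q n x) • (b • q' n x)) x := ((hasFDerivAt_q n x).const_mul b).exp
    rw [(hc.fun_mul he).fderiv]
    simp [q'_single, EuclideanSpace.single_apply, d, G, hi]
    by_cases hij : i = j <;> by_cases hj : j = Fin.last n <;> simp [hij, hj, hi] <;> ring

def M (n : ℕ) (x : EuclideanSpace ℝ (Fin (n+1))) : Matrix (Fin (n+1)) (Fin (n+1)) ℝ :=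
  fun i j => G n x i * G n x j + d n i j

def P (n : ℕ) (x : EuclideanSpace ℝ (Fin (n+1))) : Matrix (Fin (n+1)) (Fin (n+1)) ℝ :=
  fun i j => (if i = j then 1 else 0) +
    (if j = Fin.last n ∧ i ≠ Fin.last n then G n x i else 0)

def T (n : ℕ) (x : EuclideanSpace ℝ (Fin (n+1))) : Matrix (Fin (n+1)) (Fin (n+1)) ℝ :=
  fun i j => if i = Fin.last n then G n x j else if i = j then 2 else 0

lemma M_factor (n : ℕ) (x : EuclideanSpace ℝ (Fin (n+1))) : M n x = P n x * T n x := by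
  ext i j
  rw [Matrix.mul_apply]
  by_cases hi : i = Fin.last n
  · subst hi
    rw [Fin.sum_univ_castSucc]
    simp [P, T, M, G, d, (Fin.castSucc_lt_last _).ne, (Fin.castSucc_lt_last _).ne']
  · simp only [P, T, M, G, d, hi, add_mul, ite_mul, one_mul, zero_mul,
      Finset.sum_add_distrib, Finset.sum_ite_eq, Finset.sum_ite_eq', Finset.mem_univ,
      if_true, and_true, ne_eq, not_false_iff]
    by_cases hij : i = j <;> simp [hij, hi] <;> ring

lemma det_P (n : ℕ) (x : EuclideanSpace ℝ (Fin (n+1))) : (P n x).det = 1 := by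
  rw [Matrix.det_of_upperTriangular]
  · simp [P]
  · intro i j hji
    have h1 : ¬ i = j := hji.ne'
    have h2 : ¬ (j = Fin.last n ∧ i ≠ Fin.last n) := by
      rintro ⟨hj, -⟩
      exact absurd (hj ▸ hji) (Fin.le_last i).not_gt
    simp [P, h1, h2]

lemma det_T (n : ℕ) (x : EuclideanSpace ℝ (Fin (n+1))) : (T n x).det = 2 ^ n := by
  rw [Matrix.det_of_lowerTriangular]
  · rw [Fin.prod_univ_castSucc]
    simp [T, G, (Fin.castSucc_lt_last _).ne]
  · intro i j hji
    have hij : i < j := hji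
    have h1 : ¬ i = Fin.last n := by
      rintro rfl
      exact absurd hij (Fin.le_last j).not_gt
    simp [T, h1, hij.ne]

lemma det_M (n : ℕ) (x : EuclideanSpace ℝ (Fin (n+1))) : (M n x).det = 2 ^ n := by
  rw [M_factor, Matrix.det_mul, det_P, det_T, one_mul]

def S (n : ℕ) (x : EuclideanSpace ℝ (Fin (n+1))) : ℝ :=
  ∑ k : Fin n, x k.castSucc * x k.castSucc

def Minv (n : ℕ) (x : EuclideanSpace ℝ (Fin (n+1))) : Matrix (Fin (n+1)) (Fin (n+1)) ℝ :=
  fun i j =>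
    if i = Fin.last n then (if j = Fin.last n then 1 + 2 * S n x else -(x j))
    else if j = Fin.last n then -(x i) else if i = j then (2:ℝ)⁻¹ else 0

lemma hne {n : ℕ} (a : Fin n) : a.castSucc ≠ Fin.last n := (Fin.castSucc_lt_last a).ne

lemma M_mul_Minv (n : ℕ) (x : EuclideanSpace ℝ (Fin (n+1))) : M n x * Minv n x = 1 := by
  ext i j
  rw [Matrix.mul_apply, Fin.sum_univ_castSucc]
  induction i using Fin.lastCases with
  | last =>
    induction j using Fin.lastCases with
    | last =>
      have h1 : ∀ k : Fin n, M n x (Fin.last n) k.castSucc * Minv n x k.castSucc (Fin.last n)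
          = (-2) * (x k.castSucc * x k.castSucc) := by
        intro k
        simp [M, Minv, G, d, hne k]
        ring
      rw [Finset.sum_congr rfl fun k _ => h1 k, ← Finset.mul_sum]
      simp [M, Minv, G, d, S, Matrix.one_apply]
    | cast b =>
      have h1 : ∀ k : Fin n, M n x (Fin.last n) k.castSucc * Minv n x k.castSucc b.castSucc
          = if k = b then 2 * x k.castSucc * (2:ℝ)⁻¹ else 0 := by
        intro k
        by_cases h : k = b <;>
          simp [M, Minv, G, d, hne k, hne b, Fin.castSucc_inj, h] <;> ring
      rw [Finset.sum_congr rfl fun k _ => h1 k, Finset.sum_ite_eq' Finset.univ b]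
      simp [M, Minv, G, d, hne b, Matrix.one_apply, (hne b).symm]
      ring
  | cast a =>
    induction j using Fin.lastCases with
    | last =>
      have h1 : ∀ k : Fin n, M n x a.castSucc k.castSucc * Minv n x k.castSucc (Fin.last n)
          = (-4 * x a.castSucc) * (x k.castSucc * x k.castSucc) +
            (if a = k then -2 * x k.castSucc else 0) := by
        intro k
        by_cases h : a = k <;>
          simp [M, Minv, G, d, hne k, hne a, Fin.castSucc_inj, h] <;> ring
      rw [Finset.sum_congr rfl fun k _ => h1 k, Finset.sum_add_distrib, ← Finset.mul_sum,
        Finset.sum_ite_eq Finset.univ a]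
      simp [M, Minv, G, d, hne a, S, Matrix.one_apply]
      ring
    | cast b =>
      have h1 : ∀ k : Fin n, M n x a.castSucc k.castSucc * Minv n x k.castSucc b.castSucc
          = if k = b then (2 * x a.castSucc * (2 * x k.castSucc) +
              (if a = k then 2 else 0)) * (2:ℝ)⁻¹ else 0 := by
        intro k
        by_cases h : k = b <;>
          simp [M, Minv, G, d, hne k, hne a, hne b, Fin.castSucc_inj, h] <;> ring
      rw [Finset.sum_congr rfl fun k _ => h1 k, Finset.sum_ite_eq' Finset.univ b]
      by_cases hab : a = b <;>
        simp [M, Minv, G, d, hne a, hne b, Fin.castSucc_inj, hab, Matrix.one_apply] <;> ring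

lemma row_cast (n : ℕ) (x : EuclideanSpace ℝ (Fin (n+1))) (b' : ℝ) (a : Fin n) :
    ∑ j, Minv n x a.castSucc j *
      (b' ^ 2 * G n x a.castSucc * G n x j + b' * d n a.castSucc j) = b' := by
  rw [Fin.sum_univ_castSucc]
  have h1 : ∀ c : Fin n, Minv n x a.castSucc c.castSucc *
      (b' ^ 2 * G n x a.castSucc * G n x c.castSucc + b' * d n a.castSucc c.castSucc)
      = if a = c then (2:ℝ)⁻¹ * (b' ^ 2 * (2 * x a.castSucc) * (2 * x c.castSucc) + b' * 2)
        else 0 := by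
    intro c
    by_cases h : a = c <;>
      simp [Minv, G, d, hne a, hne c, Fin.castSucc_inj, h] <;> ring
  rw [Finset.sum_congr rfl fun c _ => h1 c, Finset.sum_ite_eq Finset.univ a]
  simp [Minv, G, d, hne a]
  ring

lemma row_last (n : ℕ) (x : EuclideanSpace ℝ (Fin (n+1))) (b' : ℝ) :
    ∑ j, Minv n x (Fin.last n) j *
      (b' ^ 2 * G n x (Fin.last n) * G n x j + b' * d n (Fin.last n) j) = b' ^ 2 := by
  rw [Fin.sum_univ_castSucc]
  have h1 : ∀ c : Fin n, Minv n x (Fin.last n) c.castSucc *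
      (b' ^ 2 * G n x (Fin.last n) * G n x c.castSucc + b' * d n (Fin.last n) c.castSucc)
      = (-2 * b' ^ 2) * (x c.castSucc * x c.castSucc) := by
    intro c
    simp [Minv, G, d, hne c]
    ring
  rw [Finset.sum_congr rfl fun c _ => h1 c, ← Finset.mul_sum]
  simp [Minv, G, d, S]
  ring

lemma total (n : ℕ) (x : EuclideanSpace ℝ (Fin (n+1))) (b' : ℝ) :
    ∑ i, ∑ j, Minv n x i j * (b' ^ 2 * G n x i * G n x j + b' * d n i j)
      = n * b' + b' ^ 2 := by
  rw [Fin.sum_univ_castSucc, Finset.sum_congr rfl fun a _ => row_cast n x b' a,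
    row_last n x b']
  simp [mul_comm]

end

end Stmt18

open Filter in
/-- A non-quadratic entire affine maximal type hypersurface for θ = (N-1)/N. -/
theorem stmt18 (n : ℕ) (hn : 1 ≤ n) (θ : ℝ)
    (hθ : θ = ((n : ℝ) + 1 - 1) / ((n : ℝ) + 1))
    (u : EuclideanSpace ℝ (Fin (n + 1)) → ℝ)
    (hu : ∀ x, u x = Real.exp ((∑ i : Fin n, (x i.castSucc) ^ 2) + x (Fin.last n))) :
    (∀ x : EuclideanSpace ℝ (Fin (n + 1)), ∑ i, ∑ j,
        (Hess u x)⁻¹ i j * Hess (fun z => ((Hess u z).det) ^ (-θ)) x i j = 0) ∧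
    ¬ ∃ (A : Matrix (Fin (n + 1)) (Fin (n + 1)) ℝ) (b : Fin (n + 1) → ℝ) (c : ℝ),
        ∀ x : EuclideanSpace ℝ (Fin (n + 1)),
          u x = (∑ i, ∑ j, A i j * x i * x j) + (∑ i, b i * x i) + c := by
  have hu' : u = fun z => (1:ℝ) * Real.exp ((1:ℝ) * Stmt18.q n z) := by
    funext z; rw [hu z]; simp [Stmt18.q, pow_two]
  have hθn : ((n:ℝ) + 1) * θ = n := by
    rw [hθ]
    field_simp
    ring
  constructor
  · have hHu : ∀ z, Hess u z = Real.exp (Stmt18.q n z) • Stmt18.M n z := by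
      intro z
      ext i j
      rw [hu', Stmt18.hess_aexp]
      simp only [Stmt18.M, Matrix.smul_apply, smul_eq_mul]
      ring
    have hdet : ∀ z, (Hess u z).det = Real.exp (Stmt18.q n z) ^ (n+1) * 2 ^ n := by
      intro z
      rw [hHu z, Matrix.det_smul, Stmt18.det_M]
      simp
    have hw : (fun z => ((Hess u z).det) ^ (-θ))
        = fun z => (((2:ℝ) ^ n) ^ (-θ)) * Real.exp ((-(n:ℝ)) * Stmt18.q n z) := by
      funext z
      rw [hdet z, ← Real.exp_nat_mul,
        Real.mul_rpow (Real.exp_pos _).le (by positivity),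
        Real.rpow_def_of_pos (Real.exp_pos _), Real.log_exp]
      have harg : ((n:ℕ)+1 : ℕ) * Stmt18.q n z * -θ = -(n:ℝ) * Stmt18.q n z := by
        push_cast
        linear_combination (-(Stmt18.q n z)) * hθn
      rw [harg, mul_comm]
    intro x
    have hinv : (Hess u x)⁻¹ = Real.exp (-(Stmt18.q n x)) • Stmt18.Minv n x := by
      apply Matrix.inv_eq_right_inv
      rw [hHu x, Matrix.smul_mul, Matrix.mul_smul, smul_smul, Stmt18.M_mul_Minv,
        ← Real.exp_add]
      simp
    have hessw : ∀ i j, Hess (fun z => ((Hess u z).det) ^ (-θ)) x i j =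
        (((2:ℝ) ^ n) ^ (-θ)) * Real.exp ((-(n:ℝ)) * Stmt18.q n x) *
          ((-(n:ℝ)) ^ 2 * Stmt18.G n x i * Stmt18.G n x j + (-(n:ℝ)) * Stmt18.d n i j) := by
      intro i j
      rw [hw]
      exact Stmt18.hess_aexp n _ _ x i j
    set K := Real.exp (-(Stmt18.q n x)) *
      ((((2:ℝ) ^ n) ^ (-θ)) * Real.exp ((-(n:ℝ)) * Stmt18.q n x)) with hK
    calc (∑ i, ∑ j, (Hess u x)⁻¹ i j * Hess (fun z => ((Hess u z).det) ^ (-θ)) x i j)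
        = ∑ i, ∑ j, K * (Stmt18.Minv n x i j *
            ((-(n:ℝ)) ^ 2 * Stmt18.G n x i * Stmt18.G n x j + (-(n:ℝ)) * Stmt18.d n i j)) := by
          refine Finset.sum_congr rfl fun i _ => Finset.sum_congr rfl fun j _ => ?_
          rw [hinv, hessw i j]
          simp only [Matrix.smul_apply, smul_eq_mul, hK]
          ring
      _ = K * ∑ i, ∑ j, Stmt18.Minv n x i j *
            ((-(n:ℝ)) ^ 2 * Stmt18.G n x i * Stmt18.G n x j + (-(n:ℝ)) * Stmt18.d n i j) := by
          simp_rw [← Finset.mul_sum]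
      _ = 0 := by
          rw [Stmt18.total n x (-(n:ℝ))]
          ring
  · rintro ⟨A, bb, c, hq2⟩
    have key : ∀ t : ℝ, Real.exp t
        = A (Fin.last n) (Fin.last n) * t * t + bb (Fin.last n) * t + c := by
      intro t
      have h := hq2 (EuclideanSpace.single (Fin.last n) t)
      rw [hu] at h
      simp [EuclideanSpace.single_apply, Stmt18.hne, mul_ite, ite_mul,
        Finset.sum_ite_eq', Finset.sum_ite_eq] at h
      linarith [h]
    set a := A (Fin.last n) (Fin.last n)
    set b := bb (Fin.last n)
    have h3 : Tendsto (fun t : ℝ => Real.exp t / t ^ 3) atTop atTop :=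
      Real.tendsto_exp_div_pow_atTop 3
    have h0 : Tendsto (fun t : ℝ => (a * t * t + b * t + c) / t ^ 3) atTop (nhds 0) := by
      have hEq : ∀ᶠ t in (atTop : Filter ℝ),
          (a * t * t + b * t + c) / t ^ 3 = a * t⁻¹ + b * (t ^ 2)⁻¹ + c * (t ^ 3)⁻¹ := by
        filter_upwards [Filter.eventually_gt_atTop (0:ℝ)] with t ht
        have htne := ht.ne'
        field_simp
      rw [Filter.tendsto_congr' hEq]
      have l1 : Tendsto (fun t : ℝ => t⁻¹) atTop (nhds 0) := tendsto_inv_atTop_zero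
      have l2 : Tendsto (fun t : ℝ => (t ^ 2)⁻¹) atTop (nhds 0) := by
        have := (tendsto_pow_atTop (two_ne_zero)).inv_tendsto_atTop (α := ℝ)
        exact this
      have l3 : Tendsto (fun t : ℝ => (t ^ 3)⁻¹) atTop (nhds 0) := by
        have := (tendsto_pow_atTop (three_ne_zero)).inv_tendsto_atTop (α := ℝ)
        exact this
      have := ((l1.const_mul a).add (l2.const_mul b)).add (l3.const_mul c)
      simpa using this
    have heq2 : (fun t : ℝ => Real.exp t / t ^ 3)
        = fun t : ℝ => (a * t * t + b * t + c) / t ^ 3 := funext fun t => by rw [key t]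
    rw [heq2] at h3
    exact not_tendsto_atTop_of_tendsto_nhds h0 h3
end
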